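/- arXiv:1212.5443 — 3 statements merged into one kernel-verified Lean document; each statement's English description precedes it below -/
import Mathlib

section
/- Let (a,b) be a lexicographically nonincreasing digraphic list and (a',b) a digraphic list with a ≠ a' and a ≺ a'. Then N_2(a,b) > N_2(a',b). -/
open Finset
open scoped Classical
set_option maxHeartbeats 1000000

/-- Partial sum of the first `k` entries of `a`. -/
def partSum {n : ℕ} (a : Fin n → ℕ) (k : ℕ) : ℕ :=
  ∑ i : Fin n, if (i : ℕ) < k then a i else 0

/-- `a ≺ a'` : `a` is majorized by `a'`. -/
def Majorized {n : ℕ} (a a' : Fin n → ℕ) : Prop :=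
  (∀ k : ℕ, partSum a k ≤ partSum a' k) ∧ ∑ i, a i = ∑ i, a' i

/-- `a` is nonincreasing. -/
def Nonincreasing {n : ℕ} (a : Fin n → ℕ) : Prop :=
  ∀ i j : Fin n, i ≤ j → a j ≤ a i

/-- `b` is nondecreasing. -/
def Nondecreasing {n : ℕ} (b : Fin n → ℕ) : Prop :=
  ∀ i j : Fin n, i ≤ j → b i ≤ b j

/-- `a` is obtained from `a'` by a unit `(i,j)`-transfer. -/
def UnitTransfer {n : ℕ} (a' a : Fin n → ℕ) (i j : Fin n) : Prop :=
  i < j ∧ a' j + 2 ≤ a' i ∧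
  a = Function.update (Function.update a' i (a' i - 1)) j (a' j + 1)

/-- Row sum of a 0-1 matrix. -/
def rowSum {n : ℕ} (M : Fin n → Fin n → Bool) (i : Fin n) : ℕ :=
  ∑ j, if M i j then 1 else 0

/-- Column sum of a 0-1 matrix. -/
def colSum {n : ℕ} (M : Fin n → Fin n → Bool) (j : Fin n) : ℕ :=
  ∑ i, if M i j then 1 else 0

/-- Number of loop-digraph realizations of `(a,b)`:
`n×n` 0-1 matrices with row sums `b` and column sums `a`. -/
noncomputable def N1 {n : ℕ} (a b : Fin n → ℕ) : ℕ :=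
  Nat.card {M : Fin n → Fin n → Bool //
    (∀ i, rowSum M i = b i) ∧ (∀ j, colSum M j = a j)}

def LoopDigraphic {n : ℕ} (a b : Fin n → ℕ) : Prop := 0 < N1 a b

/-- Number of digraph realizations of `(a,b)`:
`n×n` 0-1 matrices with zero diagonal, row sums `b` and column sums `a`. -/
noncomputable def N2 {n : ℕ} (a b : Fin n → ℕ) : ℕ :=
  Nat.card {M : Fin n → Fin n → Bool //
    (∀ i, M i i = false) ∧ (∀ i, rowSum M i = b i) ∧ (∀ j, colSum M j = a j)}

def Digraphic {n : ℕ} (a b : Fin n → ℕ) : Prop := 0 < N2 a b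

/-- Number of simple graph realizations of `a` (symmetric 0-1 adjacency matrices
with zero diagonal and degrees `a`). -/
noncomputable def N3 {n : ℕ} (a : Fin n → ℕ) : ℕ :=
  Nat.card {M : Fin n → Fin n → Bool //
    (∀ i j, M i j = M j i) ∧ (∀ i, M i i = false) ∧ (∀ i, rowSum M i = a i)}

def Graphic {n : ℕ} (a : Fin n → ℕ) : Prop := 0 < N3 a

/-- The minconvex list for parameters `n, m`. -/
def minconvex (n m : ℕ) : Fin n → ℕ :=
  fun i => if (i : ℕ) < m % n then m / n + 1 else m / n

/-- `(a,b)` is lexicographically nonincreasing. -/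
def LexNonincreasing {n : ℕ} (a b : Fin n → ℕ) : Prop :=
  ∀ i j : Fin n, i ≤ j → (a j < a i ∨ (a i = a j ∧ b j ≤ b i))



section Helpers
variable {n : ℕ}

lemma sum_split_two (f : Fin n → ℕ) (i j : Fin n) (hij : i ≠ j) :
    ∑ c, f c = f i + f j + ∑ c ∈ univ \ {i, j}, f c := by
  rw [← Finset.sum_sdiff (subset_univ ({i, j} : Finset (Fin n))), Finset.sum_pair hij]
  ring

def keyM (i j : Fin n) (M : Fin n → Fin n → Bool) : Fin n → Fin n → Bool :=
  fun r c => if c = i ∨ c = j then false else M r c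

lemma keyM_rowSum (i j : Fin n) (hij : i ≠ j) (M : Fin n → Fin n → Bool) (r : Fin n) :
    rowSum (keyM i j M) r = ∑ c ∈ univ \ {i, j}, (if M r c then 1 else 0) := by
  unfold rowSum keyM
  rw [sum_split_two (fun c => if (if c = i ∨ c = j then false else M r c) then 1 else 0) i j hij]
  have h1 : (if (if i = i ∨ i = j then false else M r i) then (1:ℕ) else 0) = 0 := by simp
  have h2 : (if (if j = i ∨ j = j then false else M r j) then (1:ℕ) else 0) = 0 := by simp
  rw [h1, h2]
  have : ∀ c ∈ univ \ ({i, j} : Finset (Fin n)),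
      (if (if c = i ∨ c = j then false else M r c) then (1:ℕ) else 0)
        = if M r c then 1 else 0 := by
    intro c hc
    simp only [mem_sdiff, mem_insert, mem_singleton] at hc
    have : ¬(c = i ∨ c = j) := by tauto
    simp [this]
  rw [Finset.sum_congr rfl this]
  ring

lemma row_decomp (i j : Fin n) (hij : i ≠ j) (M : Fin n → Fin n → Bool) (r : Fin n) :
    rowSum M r
      = (if M r i then 1 else 0) + (if M r j then 1 else 0) + rowSum (keyM i j M) r := by
  rw [keyM_rowSum i j hij]
  exact sum_split_two (fun c => if M r c then 1 else 0) i j hij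

lemma colSum_keyM (i j : Fin n) (M : Fin n → Fin n → Bool) (x : Fin n)
    (hxi : x ≠ i) (hxj : x ≠ j) : colSum (keyM i j M) x = colSum M x := by
  unfold colSum keyM
  refine Finset.sum_congr rfl fun r _ => ?_
  have : ¬(x = i ∨ x = j) := by tauto
  simp [this]

end Helpers

section Fiber
variable {n : ℕ}

def realizes (b c : Fin n → ℕ) (M : Fin n → Fin n → Bool) : Prop :=
  (∀ r, M r r = false) ∧ (∀ r, rowSum M r = b r) ∧ (∀ x, colSum M x = c x)

noncomputable def FreeS (i j : Fin n) (b : Fin n → ℕ) (g : Fin n → Fin n → Bool) :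
    Finset (Fin n) :=
  univ.filter (fun r => r ≠ i ∧ r ≠ j ∧ b r = rowSum g r + 1)

noncomputable def TwoS (i j : Fin n) (b : Fin n → ℕ) (g : Fin n → Fin n → Bool) :
    Finset (Fin n) :=
  univ.filter (fun r => r ≠ i ∧ r ≠ j ∧ b r = rowSum g r + 2)

noncomputable def phiI (j : Fin n) (b : Fin n → ℕ) (g : Fin n → Fin n → Bool) : ℕ :=
  if b j = rowSum g j + 1 then 1 else 0

noncomputable def fiberSet (i j : Fin n) (b : Fin n → ℕ) (g : Fin n → Fin n → Bool)
    (c : Fin n → ℕ) : Finset (Fin n → Fin n → Bool) :=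
  univ.filter (fun M => realizes b c M ∧ keyM i j M = g)

lemma keyM_comm (i j : Fin n) (M : Fin n → Fin n → Bool) : keyM i j M = keyM j i M := by
  funext r c; unfold keyM; exact if_congr or_comm rfl rfl

lemma FreeS_comm (i j : Fin n) (b : Fin n → ℕ) (g : Fin n → Fin n → Bool) :
    FreeS i j b g = FreeS j i b g := by
  unfold FreeS; apply filter_congr; intro r _; tauto

lemma TwoS_comm (i j : Fin n) (b : Fin n → ℕ) (g : Fin n → Fin n → Bool) :
    TwoS i j b g = TwoS j i b g := by
  unfold TwoS; apply filter_congr; intro r _; tauto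

lemma fiberSet_comm (i j : Fin n) (b : Fin n → ℕ) (g : Fin n → Fin n → Bool)
    (c : Fin n → ℕ) : fiberSet i j b g c = fiberSet j i b g c := by
  unfold fiberSet; apply filter_congr; intro M _; rw [keyM_comm]

lemma mem_fiberSet {i j : Fin n} {b g c M} :
    M ∈ fiberSet i j b g c ↔ realizes b c M ∧ keyM i j M = g := by
  unfold fiberSet; simp

/-- per-row equation for members of a fiber -/
lemma fiber_row_eq {i j : Fin n} (hij : i ≠ j) {b g c M}
    (hM : M ∈ fiberSet i j b g c) (r : Fin n) :
    b r = (if M r i then 1 else 0) + (if M r j then 1 else 0) + rowSum g r := by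
  obtain ⟨⟨_, hrows, _⟩, hkey⟩ := mem_fiberSet.mp hM
  rw [← hrows r, row_decomp i j hij M r, hkey]

lemma fiber_Mji {i j : Fin n} (hij : i ≠ j) {b g c M}
    (hM : M ∈ fiberSet i j b g c) :
    (if M j i then 1 else 0) = phiI j b g := by
  obtain ⟨⟨hdiag, _, _⟩, _⟩ := mem_fiberSet.mp hM
  have E := fiber_row_eq hij hM j
  rw [hdiag j] at E
  unfold phiI
  rcases h : M j i with _ | _ <;> rw [h] at E <;> simp at E ⊢
  · omega
  · omega

lemma colSum_i_decomp {i j : Fin n} (hij : i ≠ j) {b g c M}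
    (hM : M ∈ fiberSet i j b g c) :
    c i = ((FreeS i j b g).filter (fun r => M r i = true)).card
        + phiI j b g + (TwoS i j b g).card := by
  obtain ⟨⟨hdiag, hrows, hcols⟩, hkey⟩ := mem_fiberSet.mp hM
  have hsub : FreeS i j b g ⊆ univ \ ({i, j} : Finset (Fin n)) := by
    intro r hr
    simp only [FreeS, mem_filter] at hr
    simp only [mem_sdiff, mem_insert, mem_singleton, mem_univ, true_and]
    tauto
  have hsplit := sum_split_two (fun r => if M r i then (1:ℕ) else 0) i j hij
  have hMii : (if M i i then (1:ℕ) else 0) = 0 := by rw [hdiag i]; simp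
  have hMji := fiber_Mji hij hM
  -- split the residual sum
  have hsd := Finset.sum_sdiff (f := fun r => if M r i then (1:ℕ) else 0) hsub
  -- free part
  have hfree : ∑ r ∈ FreeS i j b g, (if M r i then (1:ℕ) else 0)
      = ((FreeS i j b g).filter (fun r => M r i = true)).card := by
    rw [Finset.card_filter]
  -- rest part
  have hrest : ∑ r ∈ (univ \ ({i, j} : Finset (Fin n))) \ FreeS i j b g,
      (if M r i then (1:ℕ) else 0) = (TwoS i j b g).card := by
    have hpt : ∀ r ∈ (univ \ ({i, j} : Finset (Fin n))) \ FreeS i j b g,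
        (if M r i then (1:ℕ) else 0) = if b r = rowSum g r + 2 then 1 else 0 := by
      intro r hr
      simp only [mem_sdiff, mem_univ, true_and, mem_insert, mem_singleton, FreeS,
        mem_filter] at hr
      obtain ⟨hnotij, hnotfree⟩ := hr
      have hri : r ≠ i := fun h => hnotij (Or.inl h)
      have hrj : r ≠ j := fun h => hnotij (Or.inr h)
      have hnf : ¬ (b r = rowSum g r + 1) := fun h => hnotfree ⟨hri, hrj, h⟩
      have E := fiber_row_eq hij hM r
      rcases hmi : M r i with _ | _ <;> rcases hmj : M r j with _ | _ <;>
        rw [hmi, hmj] at E <;> simp at E ⊢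
      · omega
      · exact absurd (by omega) hnf
      · exact absurd (by omega) hnf
      · omega
    rw [Finset.sum_congr rfl hpt, ← Finset.card_filter]
    congr 1
    ext r
    simp only [mem_filter, mem_sdiff, mem_univ, true_and, mem_insert, mem_singleton,
      FreeS, TwoS]
    constructor
    · rintro ⟨⟨hnotij, hnotfree⟩, h2⟩
      exact ⟨fun h => hnotij (Or.inl h), fun h => hnotij (Or.inr h), h2⟩
    · rintro ⟨h1, h2, h3⟩
      refine ⟨⟨fun h => h.elim h1 h2, fun h => ?_⟩, h3⟩
      · obtain ⟨_, _, h4⟩ := h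
        omega
  beta_reduce at hsplit hsd
  rw [← hcols i]
  unfold colSum
  rw [hsplit, hMii, hMji, ← hsd, hfree, hrest]
  ring

lemma mem_FreeS {i j : Fin n} {b g} {r : Fin n} :
    r ∈ FreeS i j b g ↔ r ≠ i ∧ r ≠ j ∧ b r = rowSum g r + 1 := by
  unfold FreeS; simp

lemma double_count (M : Fin n → Fin n → Bool) : ∑ r, rowSum M r = ∑ x, colSum M x := by
  unfold rowSum colSum; exact Finset.sum_comm

/-- the canonical completion of `g` given the set `S` of free rows pointing at column `i`. -/
noncomputable def bwdM (i j : Fin n) (b : Fin n → ℕ) (g : Fin n → Fin n → Bool)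
    (S : Finset (Fin n)) : Fin n → Fin n → Bool :=
  fun r cc =>
    if cc = i then
      (if r = i then false else if r ∈ FreeS i j b g then (if r ∈ S then true else false)
        else (if rowSum g r + 1 ≤ b r then true else false))
    else if cc = j then
      (if r = j then false else if r ∈ FreeS i j b g then (if r ∈ S then false else true)
        else (if rowSum g r + 1 ≤ b r then true else false))
    else g r cc

section FiberCard

variable {i j : Fin n} {b : Fin n → ℕ} {g : Fin n → Fin n → Bool}

/-- generic column-`i` decomposition -/
lemma colSum_i_decomp' (hij : i ≠ j) (M : Fin n → Fin n → Bool)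
    (hMii : M i i = false)
    (hMji : (if M j i then 1 else 0) = phiI j b g)
    (hrest : ∀ r, r ≠ i → r ≠ j → r ∉ FreeS i j b g →
      (if M r i then (1:ℕ) else 0) = if b r = rowSum g r + 2 then 1 else 0) :
    colSum M i = ((FreeS i j b g).filter (fun r => M r i = true)).card
        + phiI j b g + (TwoS i j b g).card := by
  have hsub : FreeS i j b g ⊆ univ \ ({i, j} : Finset (Fin n)) := by
    intro r hr
    rw [mem_FreeS] at hr
    simp only [mem_sdiff, mem_insert, mem_singleton, mem_univ, true_and]
    tauto
  have hsplit := sum_split_two (fun r => if M r i then (1:ℕ) else 0) i j hij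
  have hsd := Finset.sum_sdiff (f := fun r => if M r i then (1:ℕ) else 0) hsub
  have hfree : ∑ r ∈ FreeS i j b g, (if M r i then (1:ℕ) else 0)
      = ((FreeS i j b g).filter (fun r => M r i = true)).card := by
    rw [Finset.card_filter]
  have hrest2 : ∑ r ∈ (univ \ ({i, j} : Finset (Fin n))) \ FreeS i j b g,
      (if M r i then (1:ℕ) else 0) = (TwoS i j b g).card := by
    have hpt : ∀ r ∈ (univ \ ({i, j} : Finset (Fin n))) \ FreeS i j b g,
        (if M r i then (1:ℕ) else 0) = if b r = rowSum g r + 2 then 1 else 0 := by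
      intro r hr
      simp only [mem_sdiff, mem_univ, true_and, mem_insert, mem_singleton] at hr
      exact hrest r (fun h => hr.1 (Or.inl h)) (fun h => hr.1 (Or.inr h)) hr.2
    rw [Finset.sum_congr rfl hpt, ← Finset.card_filter]
    congr 1
    ext r
    simp only [mem_filter, mem_sdiff, mem_univ, true_and, mem_insert, mem_singleton,
      mem_FreeS, TwoS]
    constructor
    · rintro ⟨⟨hnotij, hnotfree⟩, h2⟩
      exact ⟨fun h => hnotij (Or.inl h), fun h => hnotij (Or.inr h), h2⟩
    · rintro ⟨h1, h2, h3⟩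
      refine ⟨⟨fun h => h.elim h1 h2, fun h => ?_⟩, h3⟩
      omega
  have hMii' : (if M i i then (1:ℕ) else 0) = 0 := by rw [hMii]; simp
  unfold colSum
  beta_reduce at hsplit hsd
  rw [hsplit, hMii', hMji, ← hsd, hfree, hrest2]
  ring

lemma fiber_card (hij : i ≠ j)
    (Hgi : ∀ r, g r i = false) (Hgj : ∀ r, g r j = false)
    (Hdiag : ∀ r, r ≠ i → r ≠ j → g r r = false)
    (Hle : ∀ r, rowSum g r ≤ b r) (Ht2 : ∀ r, r ≠ i → r ≠ j → b r ≤ rowSum g r + 2)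
    (Hti : b i ≤ rowSum g i + 1) (Htj : b j ≤ rowSum g j + 1)
    (c : Fin n → ℕ) (p : ℕ)
    (Hp : c i = p + phiI j b g + (TwoS i j b g).card)
    (Htot : ∑ r, b r = ∑ r, rowSum g r + (c i + c j))
    (Hcout : ∀ x, x ≠ i → x ≠ j → colSum g x = c x) :
    (fiberSet i j b g c).card = (FreeS i j b g).card.choose p := by
  classical
  rw [← Finset.card_powersetCard]
  apply Finset.card_nbij' (fun M => (FreeS i j b g).filter (fun r => M r i = true))
    (fun S => bwdM i j b g S)
  · -- forward maps into powersetCard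
    intro M hM
    rw [Finset.mem_coe, Finset.mem_powersetCard]
    refine ⟨Finset.filter_subset _ _, ?_⟩
    have hdec := colSum_i_decomp hij hM
    beta_reduce
    omega
  · -- backward maps into fiber
    intro S hS
    simp only [Finset.mem_coe]
    rw [Finset.mem_coe, Finset.mem_powersetCard] at hS
    obtain ⟨hSsub, hScard⟩ := hS
    set M := bwdM i j b g S with hMdef
    have hvi : ∀ r, M r i = (if r = i then false else if r ∈ FreeS i j b g
        then (if r ∈ S then true else false) else (if rowSum g r + 1 ≤ b r then true else false)) := by
      intro r; rw [hMdef]; unfold bwdM; beta_reduce; rw [if_pos rfl]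
    have hvj : ∀ r, M r j = (if r = j then false else if r ∈ FreeS i j b g
        then (if r ∈ S then false else true) else (if rowSum g r + 1 ≤ b r then true else false)) := by
      intro r; rw [hMdef]; unfold bwdM; beta_reduce; rw [if_neg (Ne.symm hij), if_pos rfl]
    have hvout : ∀ r cc, cc ≠ i → cc ≠ j → M r cc = g r cc := by
      intro r cc h1 h2; rw [hMdef]; unfold bwdM; beta_reduce; rw [if_neg h1, if_neg h2]
    have hiF : i ∉ FreeS i j b g := by rw [mem_FreeS]; tauto
    have hjF : j ∉ FreeS i j b g := by rw [mem_FreeS]; tauto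
    have hkey : keyM i j M = g := by
      funext r cc
      unfold keyM
      by_cases h1 : cc = i
      · rw [if_pos (Or.inl h1), h1]; exact (Hgi r).symm
      by_cases h2 : cc = j
      · rw [if_pos (Or.inr h2), h2]; exact (Hgj r).symm
      · rw [if_neg (by tauto), hvout r cc h1 h2]
    have hdiagM : ∀ r, M r r = false := by
      intro r
      by_cases h1 : r = i
      · rw [h1, hvi i, if_pos rfl]
      by_cases h2 : r = j
      · rw [h2, hvj j, if_pos rfl]
      · rw [hvout r r h1 h2]; exact Hdiag r h1 h2
    have hrowsM : ∀ r, rowSum M r = b r := by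
      intro r
      rw [row_decomp i j hij M r, hkey]
      by_cases h1 : r = i
      · rw [h1, hvi i, hvj i, if_pos rfl, if_neg hij, if_neg hiF]
        have := Hle i; have := Hti
        by_cases h : rowSum g i + 1 ≤ b i <;> simp [h] <;> omega
      by_cases h2 : r = j
      · rw [h2, hvi j, hvj j, if_pos rfl, if_neg (Ne.symm hij), if_neg hjF]
        have := Hle j; have := Htj
        by_cases h : rowSum g j + 1 ≤ b j <;> simp [h] <;> omega
      by_cases hF : r ∈ FreeS i j b g
      · have hbr : b r = rowSum g r + 1 := (mem_FreeS.mp hF).2.2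
        rw [hvi r, hvj r, if_neg h1, if_neg h2, if_pos hF, if_pos hF]
        by_cases h : r ∈ S <;> simp [h] <;> omega
      · have hbr : ¬ (b r = rowSum g r + 1) := fun h => hF (mem_FreeS.mpr ⟨h1, h2, h⟩)
        rw [hvi r, hvj r, if_neg h1, if_neg h2, if_neg hF, if_neg hF]
        have := Hle r; have := Ht2 r h1 h2
        by_cases h : rowSum g r + 1 ≤ b r <;> simp [h] <;> omega
    have hcoli : colSum M i = c i := by
      rw [colSum_i_decomp' hij M]
      · have hfilter : (FreeS i j b g).filter (fun r => M r i = true) = S := by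
          ext r
          rw [mem_filter]
          constructor
          · rintro ⟨hrF, hrMi⟩
            rw [hvi r, if_neg (mem_FreeS.mp hrF).1, if_pos hrF] at hrMi
            by_cases h : r ∈ S
            · exact h
            · rw [if_neg h] at hrMi; exact absurd hrMi (by simp)
          · intro hrS
            have hrF := hSsub hrS
            refine ⟨hrF, ?_⟩
            rw [hvi r, if_neg (mem_FreeS.mp hrF).1, if_pos hrF, if_pos hrS]
        rw [hfilter, hScard]; omega
      · rw [hvi i, if_pos rfl]
      · rw [hvi j, if_neg (Ne.symm hij), if_neg hjF]
        have := Hle j; have := Htj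
        unfold phiI
        by_cases h : rowSum g j + 1 ≤ b j <;> simp [h] <;> omega
      · intro r hr1 hr2 hrF
        rw [hvi r, if_neg hr1, if_neg hrF]
        have hbr : ¬ (b r = rowSum g r + 1) := fun h => hrF (mem_FreeS.mpr ⟨hr1, hr2, h⟩)
        have := Hle r; have := Ht2 r hr1 hr2
        by_cases h : rowSum g r + 1 ≤ b r <;> simp [h] <;> omega
    have hcout : ∀ x, x ≠ i → x ≠ j → colSum M x = c x := by
      intro x h1 h2
      rw [← Hcout x h1 h2]
      unfold colSum
      exact Finset.sum_congr rfl fun r _ => by rw [hvout r x h1 h2]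
    have hcolj : colSum M j = c j := by
      have hdc := double_count M
      have hrows_tot : ∑ r, rowSum M r = ∑ r, b r := Finset.sum_congr rfl fun r _ => hrowsM r
      have hsplitc := sum_split_two (fun x => colSum M x) i j hij
      have hout_tot : ∑ x ∈ univ \ ({i, j} : Finset (Fin n)), colSum M x
          = ∑ x ∈ univ \ ({i, j} : Finset (Fin n)), colSum g x := by
        refine Finset.sum_congr rfl fun x hx => ?_
        simp only [mem_sdiff, mem_insert, mem_singleton, mem_univ, true_and] at hx
        have h1 : x ≠ i := fun h => hx (Or.inl h)
        have h2 : x ≠ j := fun h => hx (Or.inr h)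
        rw [hcout x h1 h2, ← Hcout x h1 h2]
      have hg_tot : ∑ x, colSum g x = ∑ x ∈ univ \ ({i, j} : Finset (Fin n)), colSum g x := by
        rw [sum_split_two (fun x => colSum g x) i j hij]
        have hgi0 : colSum g i = 0 := by
          unfold colSum; refine Finset.sum_eq_zero fun r _ => by rw [Hgi r]; simp
        have hgj0 : colSum g j = 0 := by
          unfold colSum; refine Finset.sum_eq_zero fun r _ => by rw [Hgj r]; simp
        beta_reduce
        rw [hgi0, hgj0]; ring
      have hg_dc : ∑ r, rowSum g r = ∑ x, colSum g x := double_count g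
      beta_reduce at hsplitc
      rw [hdc, hsplitc, hcoli, hout_tot] at hrows_tot
      rw [hg_dc, hg_tot] at Htot
      omega
    rw [mem_fiberSet]
    refine ⟨⟨hdiagM, hrowsM, fun x => ?_⟩, hkey⟩
    by_cases h1 : x = i
    · rw [h1]; exact hcoli
    by_cases h2 : x = j
    · rw [h2]; exact hcolj
    · exact hcout x h1 h2
  · -- left inverse
    intro M hM
    obtain ⟨⟨hdiag, hrows, hcols⟩, hkey⟩ := mem_fiberSet.mp hM
    funext r cc
    unfold bwdM
    beta_reduce
    by_cases h1 : cc = i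
    · rw [h1, if_pos rfl]
      by_cases hr1 : r = i
      · rw [if_pos hr1, hr1]; exact (hdiag i).symm
      rw [if_neg hr1]
      by_cases hF : r ∈ FreeS i j b g
      · rw [if_pos hF]
        by_cases h : M r i = true
        · rw [if_pos (mem_filter.mpr ⟨hF, h⟩), h]
        · have hnm : r ∉ filter (fun r => M r i = true) (FreeS i j b g) :=
            fun hh => h (mem_filter.mp hh).2
          rw [if_neg hnm]
          rcases hmi : M r i with _ | _
          · rfl
          · exact absurd hmi h
      · rw [if_neg hF]
        have E := fiber_row_eq hij hM r
        by_cases hr2 : r = j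
        · rw [hr2] at E ⊢
          rw [hdiag j] at E
          rcases hmi : M j i with _ | _ <;> rw [hmi] at E <;> simp at E <;>
            by_cases h : rowSum g j + 1 ≤ b j <;> simp [h] <;> omega
        · have hbr : ¬ (b r = rowSum g r + 1) := fun h => hF (mem_FreeS.mpr ⟨hr1, hr2, h⟩)
          rcases hmi : M r i with _ | _ <;> rcases hmj : M r j with _ | _ <;>
            rw [hmi, hmj] at E <;> simp at E <;>
            by_cases h : rowSum g r + 1 ≤ b r <;> simp [h] <;> omega
    by_cases h2 : cc = j
    · rw [h2, if_neg (show (j:Fin n) ≠ i from Ne.symm hij), if_pos rfl]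
      by_cases hr2 : r = j
      · rw [if_pos hr2, hr2]; exact (hdiag j).symm
      rw [if_neg hr2]
      by_cases hF : r ∈ FreeS i j b g
      · rw [if_pos hF]
        have E := fiber_row_eq hij hM r
        have hbr : b r = rowSum g r + 1 := (mem_FreeS.mp hF).2.2
        by_cases h : r ∈ filter (fun r => M r i = true) (FreeS i j b g)
        · have hmi : M r i = true := (mem_filter.mp h).2
          rw [if_pos h]
          rcases hmj : M r j with _ | _
          · rfl
          · rw [hmi, hmj] at E; simp at E; omega
        · have hmi : M r i = false := by
            rcases hmi : M r i with _ | _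
            · rfl
            · exact absurd (mem_filter.mpr ⟨hF, hmi⟩) h
          rw [if_neg h]
          rcases hmj : M r j with _ | _
          · rw [hmi, hmj] at E; simp at E; omega
          · rfl
      · rw [if_neg hF]
        have E := fiber_row_eq hij hM r
        by_cases hr1 : r = i
        · rw [hr1] at E ⊢
          rw [hdiag i] at E
          rcases hmj : M i j with _ | _ <;> rw [hmj] at E <;> simp at E <;>
            by_cases h : rowSum g i + 1 ≤ b i <;> simp [h] <;> omega
        · have hbr : ¬ (b r = rowSum g r + 1) := fun h => hF (mem_FreeS.mpr ⟨hr1, hr2, h⟩)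
          rcases hmi : M r i with _ | _ <;> rcases hmj : M r j with _ | _ <;>
            rw [hmi, hmj] at E <;> simp at E <;>
            by_cases h : rowSum g r + 1 ≤ b r <;> simp [h] <;> omega
    · rw [if_neg h1, if_neg h2, ← hkey]
      unfold keyM
      rw [if_neg (by tauto)]
  · -- right inverse
    intro S hS
    rw [Finset.mem_coe, Finset.mem_powersetCard] at hS
    beta_reduce
    ext r
    rw [mem_filter]
    constructor
    · rintro ⟨hrF, hrb⟩
      unfold bwdM at hrb
      beta_reduce at hrb
      rw [if_pos rfl, if_neg (mem_FreeS.mp hrF).1, if_pos hrF] at hrb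
      by_cases h : r ∈ S
      · exact h
      · rw [if_neg h] at hrb; exact absurd hrb (by simp)
    · intro hrS
      have hrF := hS.1 hrS
      refine ⟨hrF, ?_⟩
      unfold bwdM
      beta_reduce
      rw [if_pos rfl, if_neg (mem_FreeS.mp hrF).1, if_pos hrF, if_pos hrS]

end FiberCard

section StepLemmas
variable {i j : Fin n} {b : Fin n → ℕ} {g : Fin n → Fin n → Bool}

lemma fiber_H {c : Fin n → ℕ} {M} (hij : i ≠ j) (hM : M ∈ fiberSet i j b g c) :
    (∀ r, g r i = false) ∧ (∀ r, g r j = false) ∧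
    (∀ r, r ≠ i → r ≠ j → g r r = false) ∧ (∀ r, rowSum g r ≤ b r) ∧
    (∀ r, r ≠ i → r ≠ j → b r ≤ rowSum g r + 2) ∧
    (b i ≤ rowSum g i + 1) ∧ (b j ≤ rowSum g j + 1) ∧
    (∑ r, b r = ∑ r, rowSum g r + (c i + c j)) ∧
    (∀ x, x ≠ i → x ≠ j → colSum g x = c x) := by
  obtain ⟨⟨hdiag, hrows, hcols⟩, hkey⟩ := mem_fiberSet.mp hM
  have Hgi : ∀ r, g r i = false := by
    intro r; rw [← hkey]; unfold keyM; rw [if_pos (Or.inl rfl)]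
  have Hgj : ∀ r, g r j = false := by
    intro r; rw [← hkey]; unfold keyM; rw [if_pos (Or.inr rfl)]
  have Hdiag : ∀ r, r ≠ i → r ≠ j → g r r = false := by
    intro r h1 h2; rw [← hkey]; unfold keyM; rw [if_neg (by tauto)]; exact hdiag r
  have Hbound : ∀ r, rowSum g r ≤ b r ∧ b r ≤ rowSum g r + 2 := by
    intro r
    have E := fiber_row_eq hij hM r
    have e1 : (if M r i then (1:ℕ) else 0) ≤ 1 := by split <;> omega
    have e2 : (if M r j then (1:ℕ) else 0) ≤ 1 := by split <;> omega
    omega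
  have Hti : b i ≤ rowSum g i + 1 := by
    have E := fiber_row_eq hij hM i
    rw [hdiag i] at E
    have e2 : (if M i j then (1:ℕ) else 0) ≤ 1 := by split <;> omega
    simp at E; omega
  have Htj : b j ≤ rowSum g j + 1 := by
    have E := fiber_row_eq hij hM j
    rw [hdiag j] at E
    have e1 : (if M j i then (1:ℕ) else 0) ≤ 1 := by split <;> omega
    simp at E; omega
  have Hcout : ∀ x, x ≠ i → x ≠ j → colSum g x = c x := by
    intro x h1 h2
    rw [← hcols x, ← hkey, colSum_keyM i j M x h1 h2]
  have Htot : ∑ r, b r = ∑ r, rowSum g r + (c i + c j) := by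
    have h1 : ∑ r, b r = ∑ x, colSum M x := by
      rw [← double_count M]
      exact Finset.sum_congr rfl fun r _ => (hrows r).symm
    have h2 := sum_split_two (fun x => colSum M x) i j hij
    beta_reduce at h2
    have h4 := sum_split_two (fun x => colSum g x) i j hij
    beta_reduce at h4
    have hgi0 : colSum g i = 0 := by
      unfold colSum; refine Finset.sum_eq_zero fun r _ => by rw [Hgi r]; simp
    have hgj0 : colSum g j = 0 := by
      unfold colSum; refine Finset.sum_eq_zero fun r _ => by rw [Hgj r]; simp
    have h3 : ∑ x ∈ univ \ ({i, j} : Finset (Fin n)), colSum M x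
        = ∑ x ∈ univ \ ({i, j} : Finset (Fin n)), colSum g x := by
      refine Finset.sum_congr rfl fun x hx => ?_
      simp only [mem_sdiff, mem_insert, mem_singleton, mem_univ, true_and] at hx
      rw [← hkey, colSum_keyM i j M x (fun h => hx (Or.inl h)) (fun h => hx (Or.inr h))]
    have h5 := double_count g
    rw [h2, h3, hcols i, hcols j] at h1
    rw [hgi0, hgj0] at h4
    omega
  exact ⟨Hgi, Hgj, Hdiag, fun r => (Hbound r).1, fun r _ _ => (Hbound r).2, Hti, Htj, Htot, Hcout⟩

lemma colSum_j_decomp {c : Fin n → ℕ} {M} (hij : i ≠ j) (hM : M ∈ fiberSet i j b g c) :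
    c j = ((FreeS i j b g).filter (fun r => M r j = true)).card
        + phiI i b g + (TwoS i j b g).card := by
  have hM' : M ∈ fiberSet j i b g c := by rwa [fiberSet_comm j i]
  have := colSum_i_decomp (Ne.symm hij) hM'
  rwa [FreeS_comm j i, TwoS_comm j i] at this

lemma free_split {c : Fin n → ℕ} {M} (hij : i ≠ j) (hM : M ∈ fiberSet i j b g c) :
    (FreeS i j b g).card
      = ((FreeS i j b g).filter (fun r => M r i = true)).card
      + ((FreeS i j b g).filter (fun r => M r j = true)).card := by
  have hcompl : (FreeS i j b g).filter (fun r => M r j = true)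
      = (FreeS i j b g).filter (fun r => ¬ (M r i = true)) := by
    apply Finset.filter_congr
    intro r hr
    obtain ⟨hr1, hr2, hbr⟩ := mem_FreeS.mp hr
    have E := fiber_row_eq hij hM r
    rcases hmi : M r i with _ | _ <;> rcases hmj : M r j with _ | _ <;>
      rw [hmi, hmj] at E <;> simp at E <;> simp <;> omega
  rw [hcompl, Finset.card_filter_add_card_filter_not]

lemma choose_le_pred {f p : ℕ} (hp : 1 ≤ p) (h : f + 1 ≤ 2 * p) :
    f.choose p ≤ f.choose (p - 1) := by
  obtain ⟨k, rfl⟩ : ∃ k, p = k + 1 := ⟨p - 1, by omega⟩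
  have hid := Nat.choose_succ_right_eq f k
  simp only [Nat.add_sub_cancel]
  have h1 : f - k ≤ k + 1 := by omega
  have h2 : f.choose (k+1) * (k+1) ≤ f.choose k * (k+1) := by
    rw [hid]
    exact Nat.mul_le_mul_left _ h1
  exact Nat.le_of_mul_le_mul_right h2 (by omega)

lemma choose_succ_lt_self {f p : ℕ} (h : f ≤ 2 * p) (hpf : p ≤ f) :
    f.choose (p + 1) < f.choose p := by
  have hpos : 0 < f.choose p := Nat.choose_pos hpf
  have hid := Nat.choose_succ_right_eq f p
  have h1 : f - p ≤ p := by omega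
  have h2 : f.choose (p+1) * (p+1) < f.choose p * (p+1) := by
    rw [hid]
    calc f.choose p * (f - p) ≤ f.choose p * p := Nat.mul_le_mul_left _ h1
    _ < f.choose p * (p+1) := by
        have h3 : f.choose p * p < f.choose p * (p + 1) := by
          exact (Nat.mul_lt_mul_left hpos).mpr (Nat.lt_succ_self p)
        omega
  exact Nat.lt_of_mul_lt_mul_right h2

lemma fiber_le {a a' : Fin n → ℕ} (hij : i ≠ j) (h2 : a' j + 2 ≤ a' i)
    (hai : a i + 1 = a' i) (haj : a j = a' j + 1)
    (haout : ∀ x, x ≠ i → x ≠ j → a x = a' x) :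
    (fiberSet i j b g a').card ≤ (fiberSet i j b g a).card := by
  rcases (fiberSet i j b g a').eq_empty_or_nonempty with he | ⟨M', hM'⟩
  · rw [he]; simp
  obtain ⟨Hgi, Hgj, Hdiag, Hle, Ht2, Hti, Htj, Htot, Hcout⟩ := fiber_H hij hM'
  set pI := ((FreeS i j b g).filter (fun r => M' r i = true)).card with hpI
  set pJ := ((FreeS i j b g).filter (fun r => M' r j = true)).card with hpJ
  have hdi := colSum_i_decomp hij hM'
  have hdj := colSum_j_decomp hij hM'
  have hf := free_split hij hM'
  have hphiI : phiI j b g ≤ 1 := by unfold phiI; split <;> omega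
  have hphiJ : phiI i b g ≤ 1 := by unfold phiI; split <;> omega
  have hpI1 : 1 ≤ pI := by omega
  have card' : (fiberSet i j b g a').card = (FreeS i j b g).card.choose pI :=
    fiber_card hij Hgi Hgj Hdiag Hle Ht2 Hti Htj a' pI hdi Htot Hcout
  have carda : (fiberSet i j b g a).card = (FreeS i j b g).card.choose (pI - 1) := by
    refine fiber_card hij Hgi Hgj Hdiag Hle Ht2 Hti Htj a (pI - 1) (by omega) (by omega)
      (fun x h1 h2 => by rw [Hcout x h1 h2, haout x h1 h2])
  rw [card', carda]
  exact choose_le_pred hpI1 (by omega)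

lemma fiber_lt {a a' : Fin n → ℕ} (hij : i ≠ j) (h2 : a' j + 2 ≤ a' i)
    (hai : a i + 1 = a' i) (haj : a j = a' j + 1)
    (haout : ∀ x, x ≠ i → x ≠ j → a x = a' x)
    {M} (hM : M ∈ fiberSet i j b g a)
    (hcond : a j + (if M j i then 1 else 0) ≤ a i + (if M i j then 1 else 0)) :
    (fiberSet i j b g a').card < (fiberSet i j b g a).card := by
  obtain ⟨Hgi, Hgj, Hdiag, Hle, Ht2, Hti, Htj, Htot, Hcout⟩ := fiber_H hij hM
  set pI := ((FreeS i j b g).filter (fun r => M r i = true)).card with hpI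
  set pJ := ((FreeS i j b g).filter (fun r => M r j = true)).card with hpJ
  have hdi := colSum_i_decomp hij hM
  have hdj := colSum_j_decomp hij hM
  have hf := free_split hij hM
  have hMji := fiber_Mji hij hM
  have hMij : (if M i j then (1:ℕ) else 0) = phiI i b g := by
    have hM' : M ∈ fiberSet j i b g a := by rwa [fiberSet_comm j i]
    exact fiber_Mji (Ne.symm hij) hM'
  have hple : pJ ≤ pI := by omega
  have carda : (fiberSet i j b g a).card = (FreeS i j b g).card.choose pI :=
    fiber_card hij Hgi Hgj Hdiag Hle Ht2 Hti Htj a pI hdi Htot Hcout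
  have card' : (fiberSet i j b g a').card = (FreeS i j b g).card.choose (pI + 1) := by
    refine fiber_card hij Hgi Hgj Hdiag Hle Ht2 Hti Htj a' (pI + 1) (by omega) (by omega)
      (fun x h1 h2 => by rw [Hcout x h1 h2, ← haout x h1 h2])
  rw [card', carda]
  exact choose_succ_lt_self (by omega) (by omega)

end StepLemmas

lemma N2_eq_card (a b : Fin n → ℕ) :
    N2 a b = (univ.filter (fun M : Fin n → Fin n → Bool => realizes b a M)).card := by
  unfold N2 realizes
  rw [Nat.card_eq_fintype_card, Fintype.card_subtype]
  congr 1
  ext M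
  simp

lemma realizes_filter_key (a b : Fin n → ℕ) (i j : Fin n) (g : Fin n → Fin n → Bool) :
    (univ.filter (fun M : Fin n → Fin n → Bool => realizes b a M)).filter
      (fun M => keyM i j M = g) = fiberSet i j b g a := by
  ext M
  simp [fiberSet, mem_filter, and_assoc]

lemma N2_fiberwise (a b : Fin n → ℕ) (i j : Fin n) :
    N2 a b = ∑ g ∈ (univ : Finset (Fin n → Fin n → Bool)), (fiberSet i j b g a).card := by
  rw [N2_eq_card]
  rw [Finset.card_eq_sum_card_fiberwise (f := keyM i j)
    (t := (univ : Finset (Fin n → Fin n → Bool))) (fun x _ => mem_univ _)]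
  exact Finset.sum_congr rfl fun g _ => by rw [realizes_filter_key]

lemma step_le {a a' b : Fin n → ℕ} {i j : Fin n} (hij : i ≠ j) (h2 : a' j + 2 ≤ a' i)
    (hai : a i + 1 = a' i) (haj : a j = a' j + 1)
    (haout : ∀ x, x ≠ i → x ≠ j → a x = a' x) :
    N2 a' b ≤ N2 a b := by
  rw [N2_fiberwise a' b i j, N2_fiberwise a b i j]
  exact Finset.sum_le_sum fun g _ => fiber_le hij h2 hai haj haout

lemma step_lt {a a' b : Fin n → ℕ} {i j : Fin n} (hij : i ≠ j) (h2 : a' j + 2 ≤ a' i)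
    (hai : a i + 1 = a' i) (haj : a j = a' j + 1)
    (haout : ∀ x, x ≠ i → x ≠ j → a x = a' x)
    {M : Fin n → Fin n → Bool} (hM : realizes b a M)
    (hcond : a j + (if M j i then 1 else 0) ≤ a i + (if M i j then 1 else 0)) :
    N2 a' b < N2 a b := by
  rw [N2_fiberwise a' b i j, N2_fiberwise a b i j]
  refine Finset.sum_lt_sum (fun g _ => fiber_le hij h2 hai haj haout)
    ⟨keyM i j M, mem_univ _, ?_⟩
  refine fiber_lt hij h2 hai haj haout (M := M) ?_ hcond
  rw [mem_fiberSet]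
  exact ⟨hM, rfl⟩

section Switch
variable {a b : Fin n → ℕ}

lemma sum_two_swap' (f g : Fin n → ℕ) (x y : Fin n) (hxy : x ≠ y)
    (hval : f x + f y = g x + g y) (hoff : ∀ z, z ≠ x → z ≠ y → f z = g z) :
    ∑ z, f z = ∑ z, g z := by
  rw [sum_split_two f x y hxy, sum_split_two g x y hxy, hval]
  congr 1
  refine Finset.sum_congr rfl fun z hz => ?_
  simp only [mem_sdiff, mem_insert, mem_singleton] at hz
  exact hoff z (fun h => hz.2 (Or.inl h)) (fun h => hz.2 (Or.inr h))

lemma exists_good {i j : Fin n} (hij : i ≠ j) (hab : a i = a j) (hbb : b j ≤ b i)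
    {M : Fin n → Fin n → Bool} (hM : realizes b a M) :
    ∃ M', realizes b a M' ∧
      a j + (if M' j i then 1 else 0) ≤ a i + (if M' i j then 1 else 0) := by
  obtain ⟨hdiag, hrows, hcols⟩ := hM
  rcases hMji : M j i with _ | _
  · exact ⟨M, ⟨hdiag, hrows, hcols⟩, by rw [hMji]; simp; omega⟩
  rcases hMij : M i j with _ | _
  swap
  · refine ⟨M, ⟨hdiag, hrows, hcols⟩, ?_⟩
    rw [hMij, hMji]; simp; omega
  -- bad case : M j i = true, M i j = false
  have hrowi : b i = ∑ c ∈ univ \ ({i, j} : Finset (Fin n)), (if M i c then (1:ℕ) else 0) := by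
    have := row_decomp i j hij M i
    rw [hrows i, hdiag i, hMij, keyM_rowSum i j hij] at this
    simpa using this
  have hrowj : b j = 1 + ∑ c ∈ univ \ ({i, j} : Finset (Fin n)), (if M j c then (1:ℕ) else 0) := by
    have := row_decomp i j hij M j
    rw [hrows j, hdiag j, hMji, keyM_rowSum i j hij] at this
    simpa using this
  have hcoli : a i = 1 + ∑ r ∈ univ \ ({i, j} : Finset (Fin n)), (if M r i then (1:ℕ) else 0) := by
    have := sum_split_two (fun r => if M r i then (1:ℕ) else 0) i j hij
    beta_reduce at this
    rw [hdiag i, hMji] at this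
    rw [← hcols i]
    unfold colSum
    rw [this]; simp
  have hcolj : a j = ∑ r ∈ univ \ ({i, j} : Finset (Fin n)), (if M r j then (1:ℕ) else 0) := by
    have := sum_split_two (fun r => if M r j then (1:ℕ) else 0) i j hij
    beta_reduce at this
    rw [hdiag j, hMij] at this
    rw [← hcols j]
    unfold colSum
    rw [this]; simp
  -- find c₀
  have hc : ∃ c, c ≠ i ∧ c ≠ j ∧ M i c = true ∧ M j c = false := by
    by_contra hcon
    push_neg at hcon
    have hle : ∑ c ∈ univ \ ({i, j} : Finset (Fin n)), (if M i c then (1:ℕ) else 0)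
        ≤ ∑ c ∈ univ \ ({i, j} : Finset (Fin n)), (if M j c then (1:ℕ) else 0) := by
      refine Finset.sum_le_sum fun c hc => ?_
      simp only [mem_sdiff, mem_insert, mem_singleton, mem_univ, true_and] at hc
      have h1 : c ≠ i := fun h => hc (Or.inl h)
      have h2 : c ≠ j := fun h => hc (Or.inr h)
      rcases hic : M i c with _ | _
      · simp
      · have := hcon c h1 h2 hic
        have hjc : M j c = true := by
          rcases hjc : M j c with _ | _
          · exact absurd hjc this
          · rfl
        rw [hjc]
    omega
  obtain ⟨c₀, hc₀i, hc₀j, hMic₀, hMjc₀⟩ := hc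
  -- find r₀
  have hr : ∃ r, r ≠ i ∧ r ≠ j ∧ M r j = true ∧ M r i = false := by
    by_contra hcon
    push_neg at hcon
    have hle : ∑ r ∈ univ \ ({i, j} : Finset (Fin n)), (if M r j then (1:ℕ) else 0)
        ≤ ∑ r ∈ univ \ ({i, j} : Finset (Fin n)), (if M r i then (1:ℕ) else 0) := by
      refine Finset.sum_le_sum fun r hr => ?_
      simp only [mem_sdiff, mem_insert, mem_singleton, mem_univ, true_and] at hr
      have h1 : r ≠ i := fun h => hr (Or.inl h)
      have h2 : r ≠ j := fun h => hr (Or.inr h)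
      rcases hrj : M r j with _ | _
      · simp
      · have := hcon r h1 h2 hrj
        have hri : M r i = true := by
          rcases hri : M r i with _ | _
          · exact absurd hri this
          · rfl
        rw [hri]
    omega
  obtain ⟨r₀, hr₀i, hr₀j, hMr₀j, hMr₀i⟩ := hr
  -- the switched matrix
  set M' : Fin n → Fin n → Bool := fun r c =>
    if r = i then (if c = j then true else if c = c₀ then false else M r c)
    else if r = j then (if c = c₀ then true else if c = i then false else M r c)
    else if r = r₀ then (if c = i then true else if c = j then false else M r c)
    else M r c with hM'
  have vii : M' i i = false := by
    simp [hM', hij, Ne.symm hc₀i, hdiag i]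
  have vij : M' i j = true := by simp [hM']
  have vic₀ : M' i c₀ = false := by simp [hM', hc₀j]
  have viother : ∀ c, c ≠ j → c ≠ c₀ → M' i c = M i c := by
    intro c h1 h2; simp [hM', h1, h2]
  have vjc₀ : M' j c₀ = true := by simp [hM', Ne.symm hij]
  have vji : M' j i = false := by simp [hM', Ne.symm hij, Ne.symm hc₀i]
  have vjj : M' j j = false := by simp [hM', Ne.symm hij, Ne.symm hc₀j, hdiag j]
  have vjother : ∀ c, c ≠ c₀ → c ≠ i → M' j c = M j c := by
    intro c h1 h2; simp [hM', Ne.symm hij, h1, h2]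
  have vr₀i : M' r₀ i = true := by simp [hM', hr₀i, hr₀j]
  have vr₀j : M' r₀ j = false := by simp [hM', hr₀i, hr₀j, Ne.symm hij]
  have vr₀other : ∀ c, c ≠ i → c ≠ j → M' r₀ c = M r₀ c := by
    intro c h1 h2; simp [hM', hr₀i, hr₀j, h1, h2]
  have vother : ∀ r, r ≠ i → r ≠ j → r ≠ r₀ → ∀ c, M' r c = M r c := by
    intro r h1 h2 h3 c; simp [hM', h1, h2, h3]
  refine ⟨M', ⟨?_, ?_, ?_⟩, ?_⟩
  · -- diagonal
    intro r
    by_cases h1 : r = i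
    · rw [h1]; exact vii
    by_cases h2 : r = j
    · rw [h2]; exact vjj
    by_cases h3 : r = r₀
    · rw [h3, vr₀other r₀ hr₀i hr₀j]; exact hdiag r₀
    · rw [vother r h1 h2 h3]; exact hdiag r
  · -- rows
    intro r
    by_cases h1 : r = i
    · rw [h1, ← hrows i]
      unfold rowSum
      refine sum_two_swap' _ _ j c₀ (fun h => hc₀j h.symm) ?_ ?_
      · rw [vij, vic₀, hMij, hMic₀]; simp
      · intro z hz1 hz2; rw [viother z hz1 hz2]
    by_cases h2 : r = j
    · rw [h2, ← hrows j]
      unfold rowSum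
      refine sum_two_swap' _ _ c₀ i (fun h => hc₀i h) ?_ ?_
      · rw [vjc₀, vji, hMjc₀, hMji]; simp
      · intro z hz1 hz2; rw [vjother z hz1 hz2]
    by_cases h3 : r = r₀
    · rw [h3, ← hrows r₀]
      unfold rowSum
      refine sum_two_swap' _ _ i j hij ?_ ?_
      · rw [vr₀i, vr₀j, hMr₀i, hMr₀j]; simp
      · intro z hz1 hz2; rw [vr₀other z hz1 hz2]
    · rw [← hrows r]
      unfold rowSum
      exact Finset.sum_congr rfl fun z _ => by rw [vother r h1 h2 h3]
  · -- columns
    intro x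
    by_cases h1 : x = i
    · rw [h1, ← hcols i]
      unfold colSum
      refine sum_two_swap' _ _ j r₀ (fun h => hr₀j h.symm) ?_ ?_
      · rw [vji, vr₀i, hMji, hMr₀i]; simp
      · intro z hz1 hz2
        by_cases hz3 : z = i
        · rw [hz3, vii, hdiag i]
        · rw [vother z hz3 hz1 hz2]
    by_cases h2 : x = j
    · rw [h2, ← hcols j]
      unfold colSum
      refine sum_two_swap' _ _ i r₀ (fun h => hr₀i h.symm) ?_ ?_
      · rw [vij, vr₀j, hMij, hMr₀j]; simp
      · intro z hz1 hz2
        by_cases hz3 : z = j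
        · rw [hz3, vjj, hdiag j]
        · rw [vother z hz1 hz3 hz2]
    by_cases h3 : x = c₀
    · rw [h3, ← hcols c₀]
      unfold colSum
      refine sum_two_swap' _ _ i j hij ?_ ?_
      · rw [vic₀, vjc₀, hMic₀, hMjc₀]; simp
      · intro z hz1 hz2
        by_cases hz3 : z = r₀
        · rw [hz3, vr₀other c₀ hc₀i hc₀j]
        · rw [vother z hz1 hz2 hz3]
    · rw [← hcols x]
      unfold colSum
      refine Finset.sum_congr rfl fun z _ => ?_
      by_cases hz1 : z = i
      · rw [hz1, viother x h2 h3]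
      by_cases hz2 : z = j
      · rw [hz2, vjother x h3 h1]
      by_cases hz3 : z = r₀
      · rw [hz3, vr₀other x h1 h2]
      · rw [vother z hz1 hz2 hz3]
  · rw [vji, vij, hab]; simp
end Switch

section PartSum
variable {a a' : Fin n → ℕ}

lemma partSum_succ (c : Fin n → ℕ) (k : Fin n) :
    partSum c ((k : ℕ) + 1) = partSum c (k : ℕ) + c k := by
  unfold partSum
  have hpt : ∀ t : Fin n, (if (t:ℕ) < (k:ℕ) + 1 then c t else 0)
      = (if (t:ℕ) < (k:ℕ) then c t else 0) + (if t = k then c t else 0) := by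
    intro t
    rcases lt_trichotomy (t:ℕ) (k:ℕ) with h | h | h
    · rw [if_pos (by omega), if_pos h, if_neg (fun hh => by rw [hh] at h; omega)]
      omega
    · have htk : t = k := Fin.ext h
      rw [htk, if_pos (by omega), if_neg (by omega), if_pos rfl]
      omega
    · rw [if_neg (by omega), if_neg (by omega), if_neg (fun hh => by rw [hh] at h; omega)]
  rw [Finset.sum_congr rfl (fun t _ => hpt t), Finset.sum_add_distrib]
  congr 1
  rw [Finset.sum_ite_eq' univ k c]
  simp

lemma partSum_all (c : Fin n → ℕ) : partSum c n = ∑ t, c t := by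
  unfold partSum
  exact Finset.sum_congr rfl fun t _ => if_pos t.isLt

lemma partSum_congr_prefix {k : ℕ} (h : ∀ t : Fin n, (t : ℕ) < k → a t = a' t) :
    partSum a k = partSum a' k := by
  unfold partSum
  refine Finset.sum_congr rfl fun t _ => ?_
  by_cases ht : (t:ℕ) < k
  · rw [if_pos ht, if_pos ht, h t ht]
  · rw [if_neg ht, if_neg ht]

lemma partSum_update {i j : Fin n} (hij : i ≠ j) (hpos : 1 ≤ a' i) (k : ℕ) :
    partSum (Function.update (Function.update a' i (a' i - 1)) j (a' j + 1)) k
      + (if (i:ℕ) < k then 1 else 0)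
      = partSum a' k + (if (j:ℕ) < k then 1 else 0) := by
  set a'' := Function.update (Function.update a' i (a' i - 1)) j (a' j + 1) with ha''
  have hvi : a'' i = a' i - 1 := by
    rw [ha'', Function.update_of_ne hij, Function.update_self]
  have hvj : a'' j = a' j + 1 := by rw [ha'', Function.update_self]
  have hvout : ∀ t, t ≠ i → t ≠ j → a'' t = a' t := by
    intro t h1 h2
    rw [ha'', Function.update_of_ne h2, Function.update_of_ne h1]
  unfold partSum
  rw [sum_split_two (fun t => if (t:ℕ) < k then a'' t else 0) i j hij,
    sum_split_two (fun t => if (t:ℕ) < k then a' t else 0) i j hij]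
  beta_reduce
  have htail : ∑ t ∈ univ \ ({i, j} : Finset (Fin n)), (if (t:ℕ) < k then a'' t else 0)
      = ∑ t ∈ univ \ ({i, j} : Finset (Fin n)), (if (t:ℕ) < k then a' t else 0) := by
    refine Finset.sum_congr rfl fun t ht => ?_
    simp only [mem_sdiff, mem_insert, mem_singleton, mem_univ, true_and] at ht
    rw [hvout t (fun h => ht (Or.inl h)) (fun h => ht (Or.inr h))]
  rw [htail, hvi, hvj]
  by_cases h1 : (i:ℕ) < k <;> by_cases h2 : (j:ℕ) < k <;>
    simp only [if_pos, if_neg, h1, h2, if_true, if_false] <;> omega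

end PartSum

section Main
variable {a b : Fin n → ℕ}

lemma exists_realization (h : 0 < N2 a b) : ∃ M, realizes b a M := by
  rw [N2_eq_card] at h
  rw [Finset.card_pos] at h
  obtain ⟨M, hM⟩ := h
  exact ⟨M, (mem_filter.mp hM).2⟩

lemma main_aux (b a : Fin n → ℕ)
    (hlex : ∀ i j : Fin n, i ≤ j → (a j < a i ∨ (a i = a j ∧ b j ≤ b i)))
    (hd : 0 < N2 a b) :
    ∀ N (a' : Fin n → ℕ), (∀ k, partSum a k ≤ partSum a' k) → (∑ t, a t = ∑ t, a' t) →
      (∑ k ∈ Finset.range (n+1), (partSum a' k - partSum a k)) ≤ N →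
      N2 a' b ≤ N2 a b ∧ (a ≠ a' → N2 a' b < N2 a b) := by
  have hni : ∀ p q : Fin n, p ≤ q → a q ≤ a p := fun p q h =>
    (hlex p q h).elim le_of_lt (fun h' => le_of_eq h'.1.symm)
  intro N
  induction N with
  | zero =>
    intro a' hm ht hμ
    have hsum0 : (∑ k ∈ Finset.range (n+1), (partSum a' k - partSum a k)) = 0 := by omega
    rw [Finset.sum_eq_zero_iff] at hsum0
    have heq : a = a' := by
      funext t
      have h1 := hsum0 (t:ℕ) (Finset.mem_range.mpr (by have := t.isLt; omega))
      have h2 := hsum0 ((t:ℕ)+1) (Finset.mem_range.mpr (by have := t.isLt; omega))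
      have h3 := hm (t:ℕ)
      have h4 := hm ((t:ℕ)+1)
      have e1 := partSum_succ a t
      have e2 := partSum_succ a' t
      omega
    exact ⟨le_of_eq (by rw [heq]), fun h => absurd heq h⟩
  | succ N IH =>
    intro a' hm ht hμ
    by_cases hne : a = a'
    · exact ⟨le_of_eq (by rw [hne]), fun h => absurd hne h⟩
    have hsI : (univ.filter (fun k => a k ≠ a' k)).Nonempty := by
      obtain ⟨k, hk⟩ := Function.ne_iff.mp hne
      exact ⟨k, mem_filter.mpr ⟨mem_univ _, hk⟩⟩
    set i := (univ.filter (fun k => a k ≠ a' k)).min' hsI with hidef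
    have hine : a i ≠ a' i :=
      (mem_filter.mp ((univ.filter (fun k => a k ≠ a' k)).min'_mem hsI)).2
    have hpre : ∀ t : Fin n, (t:ℕ) < (i:ℕ) → a t = a' t := by
      intro t htl
      by_contra hc
      have h5 : i ≤ t := Finset.min'_le _ t (mem_filter.mpr ⟨mem_univ _, hc⟩)
      have h6 : (i:ℕ) ≤ (t:ℕ) := h5
      omega
    have hppi : partSum a (i:ℕ) = partSum a' (i:ℕ) := partSum_congr_prefix hpre
    have hai : a i < a' i := by
      have h1 := hm ((i:ℕ)+1)
      have e1 := partSum_succ a i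
      have e2 := partSum_succ a' i
      omega
    have hsJ : (univ.filter (fun k => i < k ∧ a' k < a k)).Nonempty := by
      by_contra hc
      rw [Finset.not_nonempty_iff_eq_empty, Finset.filter_eq_empty_iff] at hc
      have hlt : ∑ t, a t < ∑ t, a' t := by
        refine Finset.sum_lt_sum (fun k _ => ?_) ⟨i, mem_univ _, hai⟩
        rcases lt_trichotomy k i with h | h | h
        · exact le_of_eq (hpre k (show (k:ℕ) < (i:ℕ) from h))
        · rw [h]; exact le_of_lt hai
        · have h7 := hc (mem_univ k)
          by_contra hkc
          push_neg at hkc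
          exact h7 ⟨h, hkc⟩
      omega
    set j := (univ.filter (fun k => i < k ∧ a' k < a k)).min' hsJ with hjdef
    have hjmem := (univ.filter (fun k => i < k ∧ a' k < a k)).min'_mem hsJ
    have hij : i < j := (mem_filter.mp hjmem).2.1
    have hijn : (i:ℕ) < (j:ℕ) := hij
    have haj : a' j < a j := (mem_filter.mp hjmem).2.2
    have hmidle : ∀ t : Fin n, (i:ℕ) < (t:ℕ) → (t:ℕ) < (j:ℕ) → a t ≤ a' t := by
      intro t h1 h2
      by_contra hc
      push_neg at hc
      have h5 : j ≤ t := Finset.min'_le _ t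
        (mem_filter.mpr ⟨mem_univ _, ⟨show i < t from h1, hc⟩⟩)
      have h6 : (j:ℕ) ≤ (t:ℕ) := h5
      omega
    have hijne : i ≠ j := ne_of_lt hij
    have h2 : a' j + 2 ≤ a' i := by
      have h3 : a j ≤ a i := hni i j (le_of_lt hij)
      omega
    set a'' := Function.update (Function.update a' i (a' i - 1)) j (a' j + 1) with ha''def
    have hvi : a'' i = a' i - 1 := by
      rw [ha''def, Function.update_of_ne hijne, Function.update_self]
    have hvj : a'' j = a' j + 1 := by rw [ha''def, Function.update_self]
    have hvout : ∀ t, t ≠ i → t ≠ j → a'' t = a' t := by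
      intro t ht1 ht2
      rw [ha''def, Function.update_of_ne ht2, Function.update_of_ne ht1]
    have hkey : ∀ k, partSum a'' k + (if (i:ℕ) < k then 1 else 0)
        = partSum a' k + (if (j:ℕ) < k then 1 else 0) :=
      fun k => partSum_update hijne (by omega) k
    have hmid : ∀ m, (i:ℕ) < m → m ≤ (j:ℕ) → partSum a m < partSum a' m := by
      intro m
      induction m with
      | zero => intro h1 _; omega
      | succ m IH2 =>
        intro hm1 hm2
        have hmn : m < n := by have := j.isLt; omega
        have e1 := partSum_succ a ⟨m, hmn⟩
        have e2 := partSum_succ a' ⟨m, hmn⟩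
        have htm : ((⟨m, hmn⟩ : Fin n):ℕ) = m := rfl
        rw [htm] at e1 e2
        rcases Nat.lt_or_ge (i:ℕ) m with h | h
        · have hIH := IH2 h (by omega)
          have hle := hmidle ⟨m, hmn⟩ (by rw [htm]; omega) (by rw [htm]; omega)
          omega
        · have him : m = (i:ℕ) := by omega
          have hti : (⟨m, hmn⟩ : Fin n) = i := Fin.ext him
          rw [hti] at e1 e2
          rw [him] at e1 e2 ⊢
          omega
    have hm'' : ∀ k, partSum a k ≤ partSum a'' k := by
      intro k
      have hk := hkey k
      have hmk := hm k
      by_cases h1 : (i:ℕ) < k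
      · by_cases h3 : (j:ℕ) < k
        · rw [if_pos h1, if_pos h3] at hk; omega
        · rw [if_pos h1, if_neg h3] at hk
          have := hmid k h1 (by omega)
          omega
      · have h3 : ¬ (j:ℕ) < k := by omega
        rw [if_neg h1, if_neg h3] at hk; omega
    have ht'' : ∑ t, a t = ∑ t, a'' t := by
      have hk := hkey n
      rw [if_pos i.isLt, if_pos j.isLt, partSum_all, partSum_all] at hk
      omega
    have hμ'' : (∑ k ∈ Finset.range (n+1), (partSum a'' k - partSum a k)) ≤ N := by
      have hlt : (∑ k ∈ Finset.range (n+1), (partSum a'' k - partSum a k))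
          < ∑ k ∈ Finset.range (n+1), (partSum a' k - partSum a k) := by
        refine Finset.sum_lt_sum (fun k _ => ?_)
          ⟨(j:ℕ), Finset.mem_range.mpr (by have := j.isLt; omega), ?_⟩
        · have hk := hkey k
          have hmk := hm k
          split_ifs at hk <;> omega
        · have hk := hkey (j:ℕ)
          rw [if_pos hijn, if_neg (lt_irrefl _)] at hk
          have h5 := hmid (j:ℕ) hijn (le_refl _)
          have h6 := hm'' (j:ℕ)
          omega
      omega
    obtain ⟨hle'', hlt''⟩ := IH a'' hm'' ht'' hμ''
    have hstep : N2 a' b ≤ N2 a'' b :=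
      step_le hijne h2 (by omega) (by omega) (fun x hx1 hx2 => hvout x hx1 hx2)
    by_cases heq : a = a''
    · have hci := congrFun heq i
      have hcj := congrFun heq j
      rw [hvi] at hci
      rw [hvj] at hcj
      have hai2 : a i + 1 = a' i := by omega
      have haj2 : a j = a' j + 1 := hcj
      have haout2 : ∀ x, x ≠ i → x ≠ j → a x = a' x := fun x hx1 hx2 =>
        (congrFun heq x).trans (hvout x hx1 hx2)
      obtain ⟨M, hM⟩ := exists_realization hd
      rcases Nat.lt_or_ge (a j) (a i) with hlt2 | hge2
      · have hcond : a j + (if M j i then 1 else 0) ≤ a i + (if M i j then 1 else 0) := by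
          have hb1 : (if M j i then (1:ℕ) else 0) ≤ 1 := by split <;> omega
          omega
        have hfin := step_lt hijne h2 hai2 haj2 haout2 hM hcond
        exact ⟨le_of_lt hfin, fun _ => hfin⟩
      · have hab : a i = a j := le_antisymm hge2 (hni i j (le_of_lt hij))
        have hbb : b j ≤ b i := by
          rcases hlex i j (le_of_lt hij) with h | h
          · omega
          · exact h.2
        obtain ⟨M', hM', hcond⟩ := exists_good hijne hab hbb hM
        have hfin := step_lt hijne h2 hai2 haj2 haout2 hM' hcond
        exact ⟨le_of_lt hfin, fun _ => hfin⟩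
    · have hlt3 := hlt'' heq
      exact ⟨le_trans hstep (le_of_lt hlt3), fun _ => lt_of_le_of_lt hstep hlt3⟩

end Main

theorem stmt16 {n : ℕ} (a a' b : Fin n → ℕ)
    (hlex : LexNonincreasing a b) (hd : Digraphic a b) (hd' : Digraphic a' b)
    (hne : a ≠ a') (hmaj : Majorized a a') :
    N2 a' b < N2 a b := by
  obtain ⟨hm, ht⟩ := hmaj
  exact (main_aux b a hlex hd
    (∑ k ∈ Finset.range (n+1), (partSum a' k - partSum a k)) a' hm ht (le_refl _)).2 hne
end Fiber
end

section
/- Let (a',b) be a digraphic list with b nondecreasing and let a be obtained from a' by a unit (i,j)-left-transfer: there exist i < j with a'_i ≤ a'_j − 1 (specifically a'_i = a'_j − 1), and a = a' + e_i − e_j. Then (a,b) is digraphic and N_2(a,b) ≥ N_2(a',b). -/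
open Finset

namespace S17

variable {n : ℕ}

/-- Integer partial sums of a `Fin n`-indexed sequence. -/
def psumZ (s : Fin n → ℤ) (k : ℕ) : ℤ := ∑ t : Fin n, if (t : ℕ) < k then s t else 0

lemma psumZ_zero (s : Fin n → ℤ) : psumZ s 0 = 0 := by simp [psumZ]

lemma psumZ_succ (s : Fin n → ℤ) {k : ℕ} (hk : k < n) :
    psumZ s (k + 1) = psumZ s k + s ⟨k, hk⟩ := by
  unfold psumZ
  rw [show (∑ t : Fin n, if (t : ℕ) < k + 1 then s t else 0)
      = ∑ t : Fin n, ((if (t : ℕ) < k then s t else 0) + (if t = ⟨k, hk⟩ then s t else 0)) from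
    Finset.sum_congr rfl (fun t _ => by
      by_cases h1 : t = (⟨k, hk⟩ : Fin n)
      · subst h1; simp
      · have h2 : (t : ℕ) ≠ k := fun e => h1 (Fin.ext e)
        by_cases h3 : (t : ℕ) < k
        · rw [if_pos (by omega), if_pos h3, if_neg h1, add_zero]
        · rw [if_neg (by omega), if_neg h3, if_neg h1, add_zero])]
  rw [Finset.sum_add_distrib, Finset.sum_ite_eq' Finset.univ (⟨k, hk⟩ : Fin n) s,
    if_pos (Finset.mem_univ _)]

lemma psumZ_total (s : Fin n → ℤ) {k : ℕ} (hk : n ≤ k) : psumZ s k = ∑ t, s t :=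
  Finset.sum_congr rfl fun t _ => if_pos (lt_of_lt_of_le t.isLt hk)

lemma psumZ_update (s : Fin n → ℤ) (r : Fin n) (x : ℤ) (k : ℕ) :
    psumZ (Function.update s r x) k = psumZ s k + (if (r : ℕ) < k then x - s r else 0) := by
  unfold psumZ
  rw [show (∑ t : Fin n, if (t : ℕ) < k then Function.update s r x t else 0)
      = ∑ t : Fin n, ((if (t : ℕ) < k then s t else 0)
          + (if t = r then (if (r : ℕ) < k then x - s r else 0) else 0)) from
    Finset.sum_congr rfl (fun t _ => by
      by_cases h1 : t = r
      · subst h1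
        by_cases h2 : (t : ℕ) < k <;> simp [h2]
      · rw [Function.update_apply, if_neg h1, if_neg h1, add_zero])]
  rw [Finset.sum_add_distrib, Finset.sum_ite_eq' Finset.univ r, if_pos (Finset.mem_univ _)]

/-- set of minimizers of `f` on `{0,…,n}`. -/
def argset (f : ℕ → ℤ) (n : ℕ) : Finset ℕ :=
  @Finset.filter ℕ (fun k => ∀ m ∈ Finset.range (n + 1), f k ≤ f m)
    (fun _ => Finset.decidableDforallFinset) (Finset.range (n + 1))

lemma argset_nonempty (f : ℕ → ℤ) (n : ℕ) : (argset f n).Nonempty := by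
  obtain ⟨k, hk, hmin⟩ := Finset.exists_min_image (Finset.range (n + 1)) f ⟨0, by simp⟩
  exact ⟨k, Finset.mem_filter.2 ⟨hk, hmin⟩⟩

/-- Last minimizer. -/
def lastArg (f : ℕ → ℤ) (n : ℕ) : ℕ := (argset f n).max' (argset_nonempty f n)

/-- First minimizer. -/
def firstArg (f : ℕ → ℤ) (n : ℕ) : ℕ := (argset f n).min' (argset_nonempty f n)

lemma mem_argset {f : ℕ → ℤ} {n k : ℕ} :
    k ∈ argset f n ↔ k ≤ n ∧ ∀ m ≤ n, f k ≤ f m := by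
  simp only [argset, Finset.mem_filter, Finset.mem_range]
  constructor
  · rintro ⟨h1, h2⟩; exact ⟨by omega, fun m hm => h2 m (by omega)⟩
  · rintro ⟨h1, h2⟩; exact ⟨by omega, fun m hm => h2 m (by omega)⟩

lemma lastArg_le (f : ℕ → ℤ) (n : ℕ) : lastArg f n ≤ n :=
  (mem_argset.1 ((argset f n).max'_mem (argset_nonempty f n))).1

lemma lastArg_min (f : ℕ → ℤ) (n : ℕ) : ∀ k ≤ n, f (lastArg f n) ≤ f k :=
  (mem_argset.1 ((argset f n).max'_mem (argset_nonempty f n))).2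

lemma lastArg_strict (f : ℕ → ℤ) (n : ℕ) {k : ℕ} (hk : k ≤ n) (h : lastArg f n < k) :
    f (lastArg f n) < f k := by
  by_contra h'
  push_neg at h'
  have hmem : k ∈ argset f n :=
    mem_argset.2 ⟨hk, fun m hm => le_trans h' (lastArg_min f n m hm)⟩
  have := Finset.le_max' (argset f n) k hmem
  unfold lastArg at h; omega

lemma firstArg_le (f : ℕ → ℤ) (n : ℕ) : firstArg f n ≤ n :=
  (mem_argset.1 ((argset f n).min'_mem (argset_nonempty f n))).1

lemma firstArg_min (f : ℕ → ℤ) (n : ℕ) : ∀ k ≤ n, f (firstArg f n) ≤ f k :=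
  (mem_argset.1 ((argset f n).min'_mem (argset_nonempty f n))).2

lemma firstArg_eq (f : ℕ → ℤ) (n : ℕ) {L : ℕ} (hL : L ≤ n)
    (hmin : ∀ k ≤ n, f L ≤ f k) (hstrict : ∀ k < L, f L < f k) :
    firstArg f n = L := by
  have hmem : L ∈ argset f n := mem_argset.2 ⟨hL, hmin⟩
  have h1 : firstArg f n ≤ L := Finset.min'_le _ _ hmem
  rcases eq_or_lt_of_le h1 with h | h
  · exact h
  · exact absurd (firstArg_min f n L hL) (not_le.2 (hstrict _ h))

lemma lastArg_lt (f : ℕ → ℤ) (n : ℕ) (h : f (lastArg f n) < f n) : lastArg f n < n := by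
  rcases eq_or_lt_of_le (lastArg_le f n) with h' | h'
  · rw [h'] at h; exact absurd h (lt_irrefl _)
  · exact h'

/-- 0/1 integer indicator of a Bool. -/
def bi (x : Bool) : ℤ := if x then 1 else 0

lemma bi_nonneg (x : Bool) : 0 ≤ bi x := by cases x <;> simp [bi]
lemma bi_le_one (x : Bool) : bi x ≤ 1 := by cases x <;> simp [bi]

/-- Column signature: `+1` on rows of pattern `(0,1)` in columns `(i,j)`, `-1` on `(1,0)`. -/
def sig (i j : Fin n) (M : Fin n → Fin n → Bool) (r : Fin n) : ℤ :=
  if r = i ∨ r = j then 0 else bi (M r j) - bi (M r i)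

/-- Row signature: `+1` on columns of pattern `(0,1)` in rows `(i,j)`, `-1` on `(1,0)`. -/
def tauu (i j : Fin n) (M : Fin n → Fin n → Bool) (c : Fin n) : ℤ :=
  if c = i ∨ c = j then 0 else bi (M j c) - bi (M i c)

lemma sig_le_one (i j : Fin n) (M : Fin n → Fin n → Bool) (r : Fin n) :
    sig i j M r ≤ 1 := by
  unfold sig
  split_ifs
  · omega
  · have := bi_nonneg (M r i); have := bi_le_one (M r j); omega

lemma tauu_le_one (i j : Fin n) (M : Fin n → Fin n → Bool) (c : Fin n) :
    tauu i j M c ≤ 1 := by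
  unfold tauu
  split_ifs
  · omega
  · have := bi_nonneg (M i c); have := bi_le_one (M j c); omega

lemma sig_eq_one {i j : Fin n} {M : Fin n → Fin n → Bool} {r : Fin n}
    (h : sig i j M r = 1) : r ≠ i ∧ r ≠ j ∧ M r i = false ∧ M r j = true := by
  unfold sig at h
  split_ifs at h with h1
  · omega
  · push_neg at h1
    refine ⟨h1.1, h1.2, ?_, ?_⟩ <;>
      cases hri : M r i <;> cases hrj : M r j <;> simp [bi, hri, hrj] at h ⊢

lemma tauu_eq_one {i j : Fin n} {M : Fin n → Fin n → Bool} {c : Fin n}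
    (h : tauu i j M c = 1) : c ≠ i ∧ c ≠ j ∧ M i c = false ∧ M j c = true := by
  unfold tauu at h
  split_ifs at h with h1
  · omega
  · push_neg at h1
    refine ⟨h1.1, h1.2, ?_, ?_⟩ <;>
      cases hic : M i c <;> cases hjc : M j c <;> simp [bi, hic, hjc] at h ⊢

lemma colSumZ {n : ℕ} (M : Fin n → Fin n → Bool) (q : Fin n) :
    ((colSum M q : ℕ) : ℤ) = ∑ p, bi (M p q) := by
  unfold colSum bi
  push_cast
  exact Finset.sum_congr rfl fun p _ => by split_ifs <;> simp

lemma rowSumZ {n : ℕ} (M : Fin n → Fin n → Bool) (p : Fin n) :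
    ((rowSum M p : ℕ) : ℤ) = ∑ q, bi (M p q) := by
  unfold rowSum bi
  push_cast
  exact Finset.sum_congr rfl fun q _ => by split_ifs <;> simp

lemma sum_sig {i j : Fin n} (hij : i ≠ j) (M : Fin n → Fin n → Bool)
    (hdi : M i i = false) (hdj : M j j = false) :
    ∑ r, sig i j M r = (colSum M j : ℤ) - (colSum M i : ℤ) - bi (M i j) + bi (M j i) := by
  have key : ∀ r : Fin n, sig i j M r
      = (bi (M r j) - bi (M r i)) + ((if r = i then bi (M r i) - bi (M r j) else 0)
        + (if r = j then bi (M r i) - bi (M r j) else 0)) := by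
    intro r
    by_cases h1 : r = i
    · subst h1; simp [sig, hij]
    · by_cases h2 : r = j
      · subst h2; simp [sig, Ne.symm hij, h1]
      · simp [sig, h1, h2]
  rw [Finset.sum_congr rfl fun r _ => key r, Finset.sum_add_distrib, Finset.sum_sub_distrib,
    Finset.sum_add_distrib, Finset.sum_ite_eq' Finset.univ i, Finset.sum_ite_eq' Finset.univ j,
    if_pos (Finset.mem_univ _), if_pos (Finset.mem_univ _), colSumZ, colSumZ, hdi, hdj]
  simp [bi]
  ring

lemma sum_tauu {i j : Fin n} (hij : i ≠ j) (M : Fin n → Fin n → Bool)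
    (hdi : M i i = false) (hdj : M j j = false) :
    ∑ c, tauu i j M c = (rowSum M j : ℤ) - (rowSum M i : ℤ) - bi (M j i) + bi (M i j) := by
  have key : ∀ c : Fin n, tauu i j M c
      = (bi (M j c) - bi (M i c)) + ((if c = i then bi (M i c) - bi (M j c) else 0)
        + (if c = j then bi (M i c) - bi (M j c) else 0)) := by
    intro c
    by_cases h1 : c = i
    · subst h1; simp [tauu, hij]
    · by_cases h2 : c = j
      · subst h2; simp [tauu, Ne.symm hij, h1]
      · simp [tauu, h1, h2]
  rw [Finset.sum_congr rfl fun c _ => key c, Finset.sum_add_distrib, Finset.sum_sub_distrib,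
    Finset.sum_add_distrib, Finset.sum_ite_eq' Finset.univ i, Finset.sum_ite_eq' Finset.univ j,
    if_pos (Finset.mem_univ _), if_pos (Finset.mem_univ _), rowSumZ, rowSumZ, hdi, hdj]
  simp [bi]
  ring

lemma sum_split1 (f : Fin n → ℕ) (r : Fin n) :
    ∑ p, f p = f r + ∑ p ∈ Finset.univ.erase r, f p :=
  (Finset.add_sum_erase _ f (Finset.mem_univ r)).symm

lemma sum_if1 (f : Fin n → ℕ) (r : Fin n) (x : ℕ) :
    (∑ p, if p = r then x else f p) = x + ∑ p ∈ Finset.univ.erase r, f p := by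
  rw [sum_split1 (fun p => if p = r then x else f p) r, if_pos rfl]
  congr 1
  exact Finset.sum_congr rfl fun p hp => if_neg (Finset.mem_erase.1 hp).1

lemma sum_split2 (f : Fin n → ℕ) {u v : Fin n} (huv : u ≠ v) :
    ∑ p, f p = f u + (f v + ∑ p ∈ (Finset.univ.erase u).erase v, f p) := by
  rw [sum_split1 f u]
  congr 1
  exact (Finset.add_sum_erase _ f (Finset.mem_erase.2 ⟨Ne.symm huv, Finset.mem_univ v⟩)).symm

lemma sum_if2 (f : Fin n → ℕ) {u v : Fin n} (huv : u ≠ v) (x y : ℕ) :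
    (∑ p, if p = u then x else if p = v then y else f p)
      = x + (y + ∑ p ∈ (Finset.univ.erase u).erase v, f p) := by
  rw [sum_split2 (fun p => if p = u then x else if p = v then y else f p) huv,
    if_pos rfl, if_neg (Ne.symm huv), if_pos rfl]
  congr 2
  refine Finset.sum_congr rfl fun p hp => ?_
  have h1 := (Finset.mem_erase.1 hp).1
  have h2 := (Finset.mem_erase.1 (Finset.mem_erase.1 hp).2).1
  rw [if_neg h2, if_neg h1]

/-- Flip one free row `r` from pattern `(0,1)` to `(1,0)` in columns `(i,j)`. -/
def smallFlip (M : Fin n → Fin n → Bool) (i j r : Fin n) : Fin n → Fin n → Bool :=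
  fun p q => if p = r then (if q = i then true else if q = j then false else M p q) else M p q

/-- The big move: transpose the `(i,j)` block and compensate in column `c`. -/
def bigFlip (M : Fin n → Fin n → Bool) (i j c : Fin n) : Fin n → Fin n → Bool :=
  fun p q =>
    if p = i then (if q = j then false else if q = c then true else M p q)
    else if p = j then (if q = i then true else if q = c then false else M p q)
    else M p q

section smallFacts

variable {i j r : Fin n} {M : Fin n → Fin n → Bool}

lemma smallFlip_diag (hri : r ≠ i) (hrj : r ≠ j) (p : Fin n) :
    smallFlip M i j r p p = M p p := by
  unfold smallFlip
  by_cases hp : p = r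
  · rw [if_pos hp, if_neg (hp ▸ hri), if_neg (hp ▸ hrj)]
  · rw [if_neg hp]

lemma smallFlip_row (hij : i ≠ j) (hMri : M r i = false) (hMrj : M r j = true) (p : Fin n) :
    rowSum (smallFlip M i j r) p = rowSum M p := by
  by_cases hp : p = r
  · unfold rowSum
    rw [show (∑ q, if smallFlip M i j r p q then 1 else 0)
        = ∑ q, if q = i then 1 else if q = j then 0 else (if M p q then 1 else 0) from
      Finset.sum_congr rfl fun q _ => by
        by_cases h1 : q = i
        · simp [smallFlip, hp, h1]
        · by_cases h2 : q = j
          · simp [smallFlip, hp, h1, h2, Ne.symm hij]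
          · simp [smallFlip, hp, h1, h2]]
    rw [sum_if2 _ hij, sum_split2 (fun q => if M p q then 1 else 0) hij, hp, hMri, hMrj]
    simp
  · unfold rowSum
    exact Finset.sum_congr rfl fun q _ => by simp [smallFlip, hp]

lemma smallFlip_col_i (hMri : M r i = false) :
    colSum (smallFlip M i j r) i = colSum M i + 1 := by
  unfold colSum
  rw [show (∑ p, if smallFlip M i j r p i then 1 else 0)
      = ∑ p, if p = r then 1 else (if M p i then 1 else 0) from
    Finset.sum_congr rfl fun p _ => by
      by_cases hp : p = r
      · simp [smallFlip, hp]
      · simp [smallFlip, hp]]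
  rw [sum_if1, sum_split1 (fun p => if M p i then 1 else 0) r, hMri]
  simp [add_comm]

lemma smallFlip_col_j (hij : i ≠ j) (hMrj : M r j = true) :
    colSum (smallFlip M i j r) j + 1 = colSum M j := by
  unfold colSum
  rw [show (∑ p, if smallFlip M i j r p j then 1 else 0)
      = ∑ p, if p = r then 0 else (if M p j then 1 else 0) from
    Finset.sum_congr rfl fun p _ => by
      by_cases hp : p = r
      · simp [smallFlip, hp, Ne.symm hij]
      · simp [smallFlip, hp]]
  rw [sum_if1, sum_split1 (fun p => if M p j then 1 else 0) r, hMrj]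
  simp [add_comm]

lemma smallFlip_col_other {q : Fin n} (hqi : q ≠ i) (hqj : q ≠ j) :
    colSum (smallFlip M i j r) q = colSum M q := by
  unfold colSum
  exact Finset.sum_congr rfl fun p _ => by
    by_cases hp : p = r
    · simp [smallFlip, hp, hqi, hqj]
    · simp [smallFlip, hp]

lemma sig_smallFlip (hij : i ≠ j) (hri : r ≠ i) (hrj : r ≠ j) :
    sig i j (smallFlip M i j r) = Function.update (sig i j M) r (-1) := by
  funext r'
  rw [Function.update_apply]
  by_cases h : r' = r
  · have hno : ¬(r' = i ∨ r' = j) := by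
      rintro (hh | hh)
      · exact hri (h ▸ hh)
      · exact hrj (h ▸ hh)
    rw [if_pos h]
    unfold sig
    rw [if_neg hno]
    have e1 : smallFlip M i j r r' j = false := by simp [smallFlip, h, Ne.symm hij]
    have e2 : smallFlip M i j r r' i = true := by simp [smallFlip, h]
    rw [e1, e2]
    simp [bi]
  · have hrow : ∀ q, smallFlip M i j r r' q = M r' q := fun q => by simp [smallFlip, h]
    rw [if_neg h]
    unfold sig
    rw [hrow, hrow]

end smallFacts

section bigFacts

variable {i j c : Fin n} {M : Fin n → Fin n → Bool}

lemma bf_other {p : Fin n} (hpi : p ≠ i) (hpj : p ≠ j) (q : Fin n) :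
    bigFlip M i j c p q = M p q := by
  unfold bigFlip; rw [if_neg hpi, if_neg hpj]

lemma bf_i_j : bigFlip M i j c i j = false := by
  unfold bigFlip; rw [if_pos rfl, if_pos rfl]

lemma bf_i_c (hcj : c ≠ j) : bigFlip M i j c i c = true := by
  unfold bigFlip; rw [if_pos rfl, if_neg hcj, if_pos rfl]

lemma bf_i_other {q : Fin n} (hqj : q ≠ j) (hqc : q ≠ c) : bigFlip M i j c i q = M i q := by
  unfold bigFlip; rw [if_pos rfl, if_neg hqj, if_neg hqc]

lemma bf_j_i (hij : i ≠ j) : bigFlip M i j c j i = true := by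
  unfold bigFlip; rw [if_neg (Ne.symm hij), if_pos rfl, if_pos rfl]

lemma bf_j_c (hij : i ≠ j) (hci : c ≠ i) : bigFlip M i j c j c = false := by
  unfold bigFlip; rw [if_neg (Ne.symm hij), if_pos rfl, if_neg hci, if_pos rfl]

lemma bf_j_other (hij : i ≠ j) {q : Fin n} (hqi : q ≠ i) (hqc : q ≠ c) :
    bigFlip M i j c j q = M j q := by
  unfold bigFlip; rw [if_neg (Ne.symm hij), if_pos rfl, if_neg hqi, if_neg hqc]

lemma bigFlip_diag (hij : i ≠ j) (hci : c ≠ i) (hcj : c ≠ j) (p : Fin n) :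
    bigFlip M i j c p p = M p p := by
  by_cases h1 : p = i
  · rw [h1]; exact bf_i_other hij (Ne.symm hci)
  · by_cases h2 : p = j
    · rw [h2]; exact bf_j_other hij (Ne.symm hij) (Ne.symm hcj)
    · exact bf_other h1 h2 p

lemma bigFlip_row (hij : i ≠ j) (hci : c ≠ i) (hcj : c ≠ j)
    (hMij : M i j = true) (hMic : M i c = false) (hMji : M j i = false) (hMjc : M j c = true)
    (p : Fin n) : rowSum (bigFlip M i j c) p = rowSum M p := by
  by_cases h1 : p = i
  · unfold rowSum
    rw [show (∑ q, if bigFlip M i j c p q then 1 else 0)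
        = ∑ q, if q = j then 0 else if q = c then 1 else (if M p q then 1 else 0) from
      Finset.sum_congr rfl fun q _ => by
        rw [h1]
        by_cases e1 : q = j
        · rw [e1, bf_i_j, if_pos rfl]; simp
        · by_cases e2 : q = c
          · rw [e2, bf_i_c hcj, if_neg hcj, if_pos rfl]; simp
          · rw [bf_i_other e1 e2, if_neg e1, if_neg e2]]
    rw [sum_if2 _ (Ne.symm hcj), sum_split2 (fun q => if M p q then 1 else 0) (Ne.symm hcj), h1,
      hMij, hMic]
    simp
  · by_cases h2 : p = j
    · unfold rowSum
      rw [show (∑ q, if bigFlip M i j c p q then 1 else 0)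
          = ∑ q, if q = i then 1 else if q = c then 0 else (if M p q then 1 else 0) from
        Finset.sum_congr rfl fun q _ => by
          rw [h2]
          by_cases e1 : q = i
          · rw [e1, bf_j_i hij]; simp
          · by_cases e2 : q = c
            · rw [e2, bf_j_c hij hci, if_neg hci, if_pos rfl]; simp
            · rw [bf_j_other hij e1 e2, if_neg e1, if_neg e2]]
      rw [sum_if2 _ (Ne.symm hci), sum_split2 (fun q => if M p q then 1 else 0) (Ne.symm hci), h2,
        hMji, hMjc]
      simp
    · unfold rowSum
      exact Finset.sum_congr rfl fun q _ => by rw [bf_other h1 h2]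

lemma bigFlip_col_i (hij : i ≠ j) (hci : c ≠ i) (hdi : M i i = false) (hMji : M j i = false) :
    colSum (bigFlip M i j c) i = colSum M i + 1 := by
  unfold colSum
  rw [show (∑ p, if bigFlip M i j c p i then 1 else 0)
      = ∑ p, if p = i then 0 else if p = j then 1 else (if M p i then 1 else 0) from
    Finset.sum_congr rfl fun p _ => by
      by_cases h1 : p = i
      · rw [h1, bf_i_other hij (Ne.symm hci), hdi, if_pos rfl]; simp
      · by_cases h2 : p = j
        · rw [h2, bf_j_i hij, if_neg (Ne.symm hij), if_pos rfl]; simp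
        · rw [bf_other h1 h2, if_neg h1, if_neg h2]]
  rw [sum_if2 _ hij, sum_split2 (fun p => if M p i then 1 else 0) hij, hdi, hMji]
  simp [add_comm]

lemma bigFlip_col_j (hij : i ≠ j) (hcj : c ≠ j) (hdj : M j j = false) (hMij : M i j = true) :
    colSum (bigFlip M i j c) j + 1 = colSum M j := by
  unfold colSum
  rw [show (∑ p, if bigFlip M i j c p j then 1 else 0)
      = ∑ p, if p = i then 0 else if p = j then 0 else (if M p j then 1 else 0) from
    Finset.sum_congr rfl fun p _ => by
      by_cases h1 : p = i
      · rw [h1, bf_i_j, if_pos rfl]; simp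
      · by_cases h2 : p = j
        · rw [h2, bf_j_other hij (Ne.symm hij) (Ne.symm hcj), hdj,
            if_neg (Ne.symm hij), if_pos rfl]; simp
        · rw [bf_other h1 h2, if_neg h1, if_neg h2]]
  rw [sum_if2 _ hij, sum_split2 (fun p => if M p j then 1 else 0) hij, hdj, hMij]
  simp [add_comm]

lemma bigFlip_col_c (hij : i ≠ j) (hci : c ≠ i) (hcj : c ≠ j)
    (hMic : M i c = false) (hMjc : M j c = true) :
    colSum (bigFlip M i j c) c = colSum M c := by
  unfold colSum
  rw [show (∑ p, if bigFlip M i j c p c then 1 else 0)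
      = ∑ p, if p = i then 1 else if p = j then 0 else (if M p c then 1 else 0) from
    Finset.sum_congr rfl fun p _ => by
      by_cases h1 : p = i
      · rw [h1, bf_i_c hcj]; simp
      · by_cases h2 : p = j
        · rw [h2, bf_j_c hij hci, if_neg (Ne.symm hij), if_pos rfl]; simp
        · rw [bf_other h1 h2, if_neg h1, if_neg h2]]
  rw [sum_if2 _ hij, sum_split2 (fun p => if M p c then 1 else 0) hij, hMic, hMjc]
  simp

lemma bigFlip_col_other (hij : i ≠ j) {q : Fin n} (hqi : q ≠ i) (hqj : q ≠ j) (hqc : q ≠ c) :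
    colSum (bigFlip M i j c) q = colSum M q := by
  unfold colSum
  refine Finset.sum_congr rfl fun p _ => ?_
  by_cases h1 : p = i
  · rw [h1, bf_i_other hqj hqc]
  · by_cases h2 : p = j
    · rw [h2, bf_j_other hij hqi hqc]
    · rw [bf_other h1 h2]

lemma sig_bigFlip (hij : i ≠ j) (hci : c ≠ i) (hcj : c ≠ j) :
    sig i j (bigFlip M i j c) = sig i j M := by
  funext r
  unfold sig
  by_cases h : r = i ∨ r = j
  · rw [if_pos h, if_pos h]
  · push_neg at h
    rw [if_neg (show ¬(r = i ∨ r = j) by tauto), if_neg (show ¬(r = i ∨ r = j) by tauto),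
      bf_other h.1 h.2, bf_other h.1 h.2]

lemma tauu_bigFlip (hij : i ≠ j) (hci : c ≠ i) (hcj : c ≠ j) :
    tauu i j (bigFlip M i j c) = Function.update (tauu i j M) c (-1) := by
  funext c'
  rw [Function.update_apply]
  by_cases h : c' = c
  · have hno : ¬(c' = i ∨ c' = j) := by
      rintro (hh | hh)
      · exact hci (h ▸ hh)
      · exact hcj (h ▸ hh)
    rw [if_pos h]
    unfold tauu
    rw [if_neg hno, h, bf_j_c hij hci, bf_i_c hcj]
    simp [bi]
  · rw [if_neg h]
    unfold tauu
    by_cases hno : c' = i ∨ c' = j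
    · rw [if_pos hno, if_pos hno]
    · push_neg at hno
      rw [if_neg (show ¬(c' = i ∨ c' = j) by tauto), if_neg (show ¬(c' = i ∨ c' = j) by tauto),
        bf_j_other hij hno.1 h, bf_i_other hno.2 h]

end bigFacts

/-- The core flip lemma: flipping the position right after the last argmin of the prefix-sum
walk turns it into the first argmin (shifted by one), enabling injective recovery. -/
lemma flip_core (s : Fin n → ℤ) (hbd : ∀ t, s t ≤ 1)
    (h : psumZ s (lastArg (psumZ s) n) < psumZ s n) :
    ∃ hℓ : lastArg (psumZ s) n < n,
      s ⟨lastArg (psumZ s) n, hℓ⟩ = 1 ∧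
      firstArg (psumZ (Function.update s ⟨lastArg (psumZ s) n, hℓ⟩ (-1))) n
        = lastArg (psumZ s) n + 1 ∧
      psumZ (Function.update s ⟨lastArg (psumZ s) n, hℓ⟩ (-1)) (lastArg (psumZ s) n + 1)
        = psumZ s (lastArg (psumZ s) n) - 1 := by
  set f := psumZ s with hf
  set ℓ := lastArg f n with hℓdef
  have hℓ : ℓ < n := lastArg_lt f n h
  refine ⟨hℓ, ?_⟩
  have hsucc : f (ℓ + 1) = f ℓ + s ⟨ℓ, hℓ⟩ := psumZ_succ s hℓ
  have hstr : f ℓ < f (ℓ + 1) := lastArg_strict f n (by omega) (by omega)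
  have hs1 : s ⟨ℓ, hℓ⟩ = 1 := le_antisymm (hbd _) (by omega)
  refine ⟨hs1, ?_⟩
  have hupd : ∀ k, psumZ (Function.update s ⟨ℓ, hℓ⟩ (-1)) k
      = f k + (if ℓ < k then -2 else 0) := by
    intro k
    rw [psumZ_update]
    simp only [hs1]
    norm_num
    rfl
  have hval : psumZ (Function.update s ⟨ℓ, hℓ⟩ (-1)) (ℓ + 1) = f ℓ - 1 := by
    rw [hupd, if_pos (by omega), hsucc, hs1]; ring
  refine ⟨?_, hval⟩
  apply firstArg_eq _ n (by omega)
  · intro k hk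
    rw [hval, hupd]
    by_cases hkℓ : ℓ < k
    · rw [if_pos hkℓ]
      have : f ℓ < f k := lastArg_strict f n hk hkℓ
      omega
    · rw [if_neg hkℓ]
      have : f ℓ ≤ f k := lastArg_min f n k hk
      omega
  · intro k hk
    rw [hval, hupd, if_neg (by omega)]
    have : f ℓ ≤ f k := lastArg_min f n k (by omega)
    omega

/-- The injection on matrices. -/
def Psi (i j : Fin n) (M : Fin n → Fin n → Bool) : Fin n → Fin n → Bool :=
  if h : psumZ (sig i j M) (lastArg (psumZ (sig i j M)) n) < psumZ (sig i j M) n then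
    smallFlip M i j ⟨lastArg (psumZ (sig i j M)) n, lastArg_lt _ n h⟩
  else if h2 : psumZ (tauu i j M) (lastArg (psumZ (tauu i j M)) n) < psumZ (tauu i j M) n then
    bigFlip M i j ⟨lastArg (psumZ (tauu i j M)) n, lastArg_lt _ n h2⟩
  else M

lemma Psi_spec {i j : Fin n} (hij : i ≠ j) (a' b : Fin n → ℕ)
    (hval : a' i + 1 = a' j) (hb : b i ≤ b j)
    (M : Fin n → Fin n → Bool) (h1 : ∀ p, M p p = false)
    (h2 : ∀ p, rowSum M p = b p) (h3 : ∀ q, colSum M q = a' q) :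
    (∃ r : Fin n, r ≠ i ∧ r ≠ j ∧ M r i = false ∧ M r j = true ∧
      Psi i j M = smallFlip M i j r ∧
      (r : ℕ) + 1 = firstArg (psumZ (sig i j (Psi i j M))) n ∧
      ∃ k ≤ n, psumZ (sig i j (Psi i j M)) k < 0) ∨
    (∃ c : Fin n, c ≠ i ∧ c ≠ j ∧ M i c = false ∧ M j c = true ∧
      M i j = true ∧ M j i = false ∧
      Psi i j M = bigFlip M i j c ∧
      (c : ℕ) + 1 = firstArg (psumZ (tauu i j (Psi i j M))) n ∧
      ∀ k ≤ n, 0 ≤ psumZ (sig i j (Psi i j M)) k) := by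
  have hfmin0 : psumZ (sig i j M) (lastArg (psumZ (sig i j M)) n) ≤ 0 := by
    have h0 := lastArg_min (psumZ (sig i j M)) n 0 (Nat.zero_le n)
    rwa [psumZ_zero] at h0
  by_cases hsm : psumZ (sig i j M) (lastArg (psumZ (sig i j M)) n) < psumZ (sig i j M) n
  · -- small case
    left
    obtain ⟨hℓ, hs1, hfirst, hvalue⟩ := flip_core (sig i j M) (sig_le_one i j M) hsm
    obtain ⟨hri, hrj, hMri, hMrj⟩ := sig_eq_one hs1
    have hPsi : Psi i j M = smallFlip M i j ⟨lastArg (psumZ (sig i j M)) n, hℓ⟩ := by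
      unfold Psi
      rw [dif_pos hsm]
    refine ⟨⟨lastArg (psumZ (sig i j M)) n, hℓ⟩, hri, hrj, hMri, hMrj, hPsi, ?_, ?_⟩
    · rw [hPsi, sig_smallFlip hij hri hrj]
      exact hfirst.symm
    · refine ⟨lastArg (psumZ (sig i j M)) n + 1, Nat.succ_le_of_lt hℓ, ?_⟩
      rw [hPsi, sig_smallFlip hij hri hrj, hvalue]
      omega
  · -- big case
    right
    have hfn : psumZ (sig i j M) n = 1 - bi (M i j) + bi (M j i) := by
      rw [psumZ_total _ (le_refl n), sum_sig hij M (h1 i) (h1 j), h3 i, h3 j]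
      have : ((a' j : ℕ) : ℤ) = ((a' i : ℕ) : ℤ) + 1 := by exact_mod_cast hval.symm
      omega
    have hle : psumZ (sig i j M) n ≤ psumZ (sig i j M) (lastArg (psumZ (sig i j M)) n) :=
      not_lt.1 hsm
    have hij_true : M i j = true ∧ M j i = false := by
      cases hMij : M i j <;> cases hMji : M j i
      · exfalso; rw [hMij, hMji] at hfn; simp [bi] at hfn; omega
      · exfalso; rw [hMij, hMji] at hfn; simp [bi] at hfn; omega
      · exact ⟨rfl, rfl⟩
      · exfalso; rw [hMij, hMji] at hfn; simp [bi] at hfn; omega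
    obtain ⟨hMij, hMji⟩ := hij_true
    have hfn0 : psumZ (sig i j M) n = 0 := by rw [hfn, hMij, hMji]; simp [bi]
    have hfℓ0 : psumZ (sig i j M) (lastArg (psumZ (sig i j M)) n) = 0 := by omega
    have hfnonneg : ∀ k ≤ n, 0 ≤ psumZ (sig i j M) k := fun k hk =>
      hfℓ0 ▸ lastArg_min (psumZ (sig i j M)) n k hk
    have hgn : psumZ (tauu i j M) n = (b j : ℤ) - (b i : ℤ) + 1 := by
      rw [psumZ_total _ (le_refl n), sum_tauu hij M (h1 i) (h1 j), h2 i, h2 j, hMij, hMji]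
      simp [bi]
    have hbg : psumZ (tauu i j M) (lastArg (psumZ (tauu i j M)) n) < psumZ (tauu i j M) n := by
      have h01 : psumZ (tauu i j M) (lastArg (psumZ (tauu i j M)) n) ≤ 0 := by
        have h0 := lastArg_min (psumZ (tauu i j M)) n 0 (Nat.zero_le n)
        rwa [psumZ_zero] at h0
      have hbb : (b i : ℤ) ≤ (b j : ℤ) := by exact_mod_cast hb
      rw [hgn]
      omega
    obtain ⟨hd, ht1, hfirst, hvalue⟩ := flip_core (tauu i j M) (tauu_le_one i j M) hbg
    obtain ⟨hci, hcj, hMic, hMjc⟩ := tauu_eq_one ht1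
    have hPsi : Psi i j M = bigFlip M i j ⟨lastArg (psumZ (tauu i j M)) n, hd⟩ := by
      unfold Psi
      rw [dif_neg hsm, dif_pos hbg]
    refine ⟨⟨lastArg (psumZ (tauu i j M)) n, hd⟩, hci, hcj, hMic, hMjc, hMij, hMji, hPsi, ?_, ?_⟩
    · rw [hPsi, tauu_bigFlip hij hci hcj]
      exact hfirst.symm
    · intro k hk
      rw [hPsi, sig_bigFlip hij hci hcj]
      exact hfnonneg k hk

lemma Psi_mem {i j : Fin n} (hij : i ≠ j) (a' b : Fin n → ℕ)
    (hval : a' i + 1 = a' j) (hb : b i ≤ b j)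
    (M : Fin n → Fin n → Bool) (h1 : ∀ p, M p p = false)
    (h2 : ∀ p, rowSum M p = b p) (h3 : ∀ q, colSum M q = a' q) :
    (∀ p, Psi i j M p p = false) ∧ (∀ p, rowSum (Psi i j M) p = b p) ∧
    (colSum (Psi i j M) i = a' i + 1) ∧ (colSum (Psi i j M) j + 1 = a' j) ∧
    (∀ q, q ≠ i → q ≠ j → colSum (Psi i j M) q = a' q) := by
  rcases Psi_spec hij a' b hval hb M h1 h2 h3 with
    ⟨r, hri, hrj, hMri, hMrj, hPsi, -, -⟩ | ⟨c, hci, hcj, hMic, hMjc, hMij, hMji, hPsi, -, -⟩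
  · rw [hPsi]
    refine ⟨fun p => (smallFlip_diag hri hrj p).trans (h1 p),
      fun p => (smallFlip_row hij hMri hMrj p).trans (h2 p), ?_, ?_, ?_⟩
    · rw [smallFlip_col_i hMri, h3 i]
    · rw [smallFlip_col_j hij hMrj, h3 j]
    · intro q hqi hqj
      rw [smallFlip_col_other hqi hqj, h3 q]
  · rw [hPsi]
    refine ⟨fun p => (bigFlip_diag hij hci hcj p).trans (h1 p),
      fun p => (bigFlip_row hij hci hcj hMij hMic hMji hMjc p).trans (h2 p), ?_, ?_, ?_⟩
    · rw [bigFlip_col_i hij hci (h1 i) hMji, h3 i]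
    · rw [bigFlip_col_j hij hcj (h1 j) hMij, h3 j]
    · intro q hqi hqj
      by_cases hqc : q = c
      · rw [hqc, bigFlip_col_c hij hci hcj hMic hMjc, h3 c]
      · rw [bigFlip_col_other hij hqi hqj hqc, h3 q]

lemma Psi_inj {i j : Fin n} (hij : i ≠ j) (a' b : Fin n → ℕ)
    (hval : a' i + 1 = a' j) (hb : b i ≤ b j)
    (M₁ M₂ : Fin n → Fin n → Bool)
    (h11 : ∀ p, M₁ p p = false) (h12 : ∀ p, rowSum M₁ p = b p) (h13 : ∀ q, colSum M₁ q = a' q)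
    (h21 : ∀ p, M₂ p p = false) (h22 : ∀ p, rowSum M₂ p = b p) (h23 : ∀ q, colSum M₂ q = a' q)
    (heq : Psi i j M₁ = Psi i j M₂) : M₁ = M₂ := by
  rcases Psi_spec hij a' b hval hb M₁ h11 h12 h13 with
    ⟨r₁, hri₁, hrj₁, hMri₁, hMrj₁, hPsi₁, hfirst₁, hdisc₁⟩ |
    ⟨c₁, hci₁, hcj₁, hMic₁, hMjc₁, hMij₁, hMji₁, hPsi₁, hfirst₁, hdisc₁⟩ <;>
  rcases Psi_spec hij a' b hval hb M₂ h21 h22 h23 with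
    ⟨r₂, hri₂, hrj₂, hMri₂, hMrj₂, hPsi₂, hfirst₂, hdisc₂⟩ |
    ⟨c₂, hci₂, hcj₂, hMic₂, hMjc₂, hMij₂, hMji₂, hPsi₂, hfirst₂, hdisc₂⟩
  · -- small / small
    have hr : r₁ = r₂ := by
      have e : (r₁ : ℕ) + 1 = (r₂ : ℕ) + 1 := by
        rw [hfirst₁]; rw [heq]; rw [← hfirst₂]
      exact Fin.ext (Nat.succ_injective e)
    subst hr
    have E : smallFlip M₁ i j r₁ = smallFlip M₂ i j r₁ := by
      rw [← hPsi₁, ← hPsi₂, heq]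
    funext p q
    by_cases hp : p = r₁
    · by_cases hq1 : q = i
      · rw [hp, hq1, hMri₁, hMri₂]
      · by_cases hq2 : q = j
        · rw [hp, hq2, hMrj₁, hMrj₂]
        · have := congrFun (congrFun E p) q
          simp only [smallFlip, if_pos hp, if_neg hq1, if_neg hq2] at this
          exact this
    · have := congrFun (congrFun E p) q
      simp only [smallFlip, if_neg hp] at this
      exact this
  · -- small / big : contradiction via discriminator
    exfalso
    obtain ⟨k, hk, hneg⟩ := hdisc₁
    rw [heq] at hneg
    exact absurd (hdisc₂ k hk) (not_le.2 hneg)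
  · -- big / small : contradiction
    exfalso
    obtain ⟨k, hk, hneg⟩ := hdisc₂
    rw [← heq] at hneg
    exact absurd (hdisc₁ k hk) (not_le.2 hneg)
  · -- big / big
    have hc : c₁ = c₂ := by
      have e : (c₁ : ℕ) + 1 = (c₂ : ℕ) + 1 := by
        rw [hfirst₁]; rw [heq]; rw [← hfirst₂]
      exact Fin.ext (Nat.succ_injective e)
    subst hc
    have E : bigFlip M₁ i j c₁ = bigFlip M₂ i j c₁ := by
      rw [← hPsi₁, ← hPsi₂, heq]
    funext p q
    by_cases hp1 : p = i
    · by_cases hq1 : q = j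
      · rw [hp1, hq1, hMij₁, hMij₂]
      · by_cases hq2 : q = c₁
        · rw [hp1, hq2, hMic₁, hMic₂]
        · have := congrFun (congrFun E p) q
          rw [hp1] at this ⊢
          rw [bf_i_other hq1 hq2, bf_i_other hq1 hq2] at this
          exact this
    · by_cases hp2 : p = j
      · by_cases hq1 : q = i
        · rw [hp2, hq1, hMji₁, hMji₂]
        · by_cases hq2 : q = c₁
          · rw [hp2, hq2, hMjc₁, hMjc₂]
          · have := congrFun (congrFun E p) q
            rw [hp2] at this ⊢
            rw [bf_j_other hij hq1 hq2, bf_j_other hij hq1 hq2] at this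
            exact this
      · have := congrFun (congrFun E p) q
        rw [bf_other hp1 hp2, bf_other hp1 hp2] at this
        exact this

end S17

theorem stmt17 {n : ℕ} (a a' b : Fin n → ℕ) (i j : Fin n)
    (hd' : Digraphic a' b) (hb : Nondecreasing b)
    (hij : i < j) (hval : a' i + 1 = a' j)
    (ha : a = Function.update (Function.update a' i (a' i + 1)) j (a' j - 1)) :
    Digraphic a b ∧ N2 a' b ≤ N2 a b := by
  have hijne : i ≠ j := ne_of_lt hij
  have hb' : b i ≤ b j := hb i j (le_of_lt hij)
  have hai : a i = a' i + 1 := by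
    rw [ha, Function.update_of_ne hijne, Function.update_self]
  have haj : a j = a' j - 1 := by
    rw [ha, Function.update_self]
  have haq : ∀ q, q ≠ i → q ≠ j → a q = a' q := by
    intro q hqi hqj
    rw [ha, Function.update_of_ne hqj, Function.update_of_ne hqi]
  have key : N2 a' b ≤ N2 a b := by
    unfold N2
    refine Nat.card_le_card_of_injective
      (fun Mh => ⟨S17.Psi i j Mh.1, ?_⟩) ?_
    · obtain ⟨g1, g2, g3, g4, g5⟩ :=
        S17.Psi_mem hijne a' b hval hb' Mh.1 Mh.2.1 Mh.2.2.1 Mh.2.2.2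
      refine ⟨g1, g2, fun q => ?_⟩
      by_cases hqi : q = i
      · rw [hqi, g3, hai]
      · by_cases hqj : q = j
        · rw [hqj, haj]; omega
        · rw [g5 q hqi hqj, haq q hqi hqj]
    · rintro ⟨M₁, h11, h12, h13⟩ ⟨M₂, h21, h22, h23⟩ hMs
      have : S17.Psi i j M₁ = S17.Psi i j M₂ := congrArg Subtype.val hMs
      exact Subtype.ext (S17.Psi_inj hijne a' b hval hb' M₁ M₂ h11 h12 h13 h21 h22 h23 this)
  exact ⟨lt_of_lt_of_le hd' key, key⟩
end

section
/- Let (a,b) be a digraphic list with b nondecreasing and let σ be a permutation such that a_σ = (a_{σ(1)},…,a_{σ(n)}) is nonincreasing (so (a_σ, b) is the opposed list). Then (a_σ, b) is digraphic and N_2(a_σ, b) ≥ N_2(a,b): the opposed ordering maximizes the number of digraph realizations over all permutations of a. -/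
open Finset

namespace S18
variable {n : ℕ}

def nb (x : Bool) : ℕ := if x then 1 else 0

lemma nb_le_one (x : Bool) : nb x ≤ 1 := by cases x <;> simp [nb]

/-- pairs of 0-1 vectors supported off `p,q`, with pattern constraint and sums. -/
def Pr (p q : Fin n) (base tgt : Fin n → ℕ) (x dx y dy : ℕ) :
    Finset ((Fin n → Bool) × (Fin n → Bool)) :=
  univ.filter fun uv =>
    uv.1 p = false ∧ uv.1 q = false ∧ uv.2 p = false ∧ uv.2 q = false ∧
    (∀ i, i ≠ p → i ≠ q → base i + nb (uv.1 i) + nb (uv.2 i) = tgt i) ∧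
    (∑ i, nb (uv.1 i)) + dx = x ∧ (∑ i, nb (uv.2 i)) + dy = y

lemma mem_Pr {p q : Fin n} {base tgt : Fin n → ℕ} {x dx y dy : ℕ} {uv} :
    uv ∈ Pr p q base tgt x dx y dy ↔
      uv.1 p = false ∧ uv.1 q = false ∧ uv.2 p = false ∧ uv.2 q = false ∧
      (∀ i, i ≠ p → i ≠ q → base i + nb (uv.1 i) + nb (uv.2 i) = tgt i) ∧
      (∑ i, nb (uv.1 i)) + dx = x ∧ (∑ i, nb (uv.2 i)) + dy = y := by
  simp [Pr]

lemma sum_nb (u : Fin n → Bool) :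
    ∑ i, nb (u i) = (univ.filter fun i => u i = true).card := by
  rw [Finset.card_filter]
  refine Finset.sum_congr rfl fun i _ => ?_
  cases h : u i <;> simp [nb, h]

lemma sum_nb_update (u : Fin n → Bool) (i : Fin n) (bv : Bool) :
    (∑ j, nb (Function.update u i bv j)) + nb (u i) = (∑ j, nb (u j)) + nb bv := by
  rw [← Finset.add_sum_erase univ (fun j => nb (Function.update u i bv j)) (mem_univ i),
      ← Finset.add_sum_erase univ (fun j => nb (u j)) (mem_univ i)]
  have h1 : ∑ j ∈ univ.erase i, nb (Function.update u i bv j)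
      = ∑ j ∈ univ.erase i, nb (u j) := by
    refine Finset.sum_congr rfl fun j hj => ?_
    rw [Function.update_of_ne (Finset.ne_of_mem_erase hj)]
  rw [h1, Function.update_self]
  omega

end S18

namespace CoreSec
open S18
variable {n : ℕ} (p q : Fin n) (base tgt : Fin n → ℕ)

/-- pattern-2 positions -/
def G (p q : Fin n) (base tgt : Fin n → ℕ) : Finset (Fin n) :=
  univ.filter fun i => i ≠ p ∧ i ≠ q ∧ base i + 2 = tgt i

lemma filter_and_eq_G {x dx y dy : ℕ} {uv}
    (h : uv ∈ Pr p q base tgt x dx y dy) :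
    (univ.filter fun i => uv.1 i = true ∧ uv.2 i = true) = G p q base tgt := by
  obtain ⟨h1, h2, h3, h4, h5, h6, h7⟩ := mem_Pr.mp h
  ext i
  simp only [G, mem_filter, mem_univ, true_and]
  constructor
  · rintro ⟨hu, hv⟩
    have hip : i ≠ p := fun e => by subst e; rw [h1] at hu; exact Bool.noConfusion hu
    have hiq : i ≠ q := fun e => by subst e; rw [h2] at hu; exact Bool.noConfusion hu
    have := h5 i hip hiq
    rw [hu, hv] at this
    exact ⟨hip, hiq, by simpa [nb] using this⟩
  · rintro ⟨hip, hiq, hpat⟩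
    have := h5 i hip hiq
    have k1 := nb_le_one (uv.1 i); have k2 := nb_le_one (uv.2 i)
    have key : nb (uv.1 i) + nb (uv.2 i) = 2 := by omega
    refine ⟨?_, ?_⟩
    · cases hu : uv.1 i
      · rw [hu] at key; have h0 : nb false = 0 := rfl; have h2 := nb_le_one (uv.2 i); omega
      · rfl
    · cases hv : uv.2 i
      · rw [hv] at key; have h0 : nb false = 0 := rfl; have h2 := nb_le_one (uv.1 i); omega
      · rfl

lemma deg_add_G {x dx y dy : ℕ} {uv}
    (h : uv ∈ Pr p q base tgt x dx y dy) :
    (univ.filter fun i => uv.2 i = true ∧ uv.1 i = false).card + (G p q base tgt).card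
      = ∑ i, nb (uv.2 i) := by
  rw [sum_nb]
  have hsplit : (univ.filter fun i => uv.2 i = true)
      = (univ.filter fun i => uv.2 i = true ∧ uv.1 i = false)
        ∪ (univ.filter fun i => uv.1 i = true ∧ uv.2 i = true) := by
    ext i
    simp only [mem_filter, mem_univ, true_and, mem_union]
    cases hu : uv.1 i <;> simp [hu] <;>
      try tauto
  rw [hsplit, Finset.card_union_of_disjoint, filter_and_eq_G p q base tgt h]
  rw [Finset.disjoint_left]
  intro i hi hi'
  simp only [mem_filter, mem_univ, true_and] at hi hi'
  rw [hi.2] at hi'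
  exact Bool.noConfusion hi'.1


lemma deg_add_G' {x dx y dy : ℕ} {uv}
    (h : uv ∈ Pr p q base tgt x dx y dy) :
    (univ.filter fun i => uv.1 i = true ∧ uv.2 i = false).card + (G p q base tgt).card
      = ∑ i, nb (uv.1 i) := by
  rw [sum_nb]
  have hsplit : (univ.filter fun i => uv.1 i = true)
      = (univ.filter fun i => uv.1 i = true ∧ uv.2 i = false)
        ∪ (univ.filter fun i => uv.1 i = true ∧ uv.2 i = true) := by
    ext i
    simp only [mem_filter, mem_univ, true_and, mem_union]
    cases hv : uv.2 i <;> simp [hv] <;>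
      try tauto
  rw [hsplit, Finset.card_union_of_disjoint, filter_and_eq_G p q base tgt h]
  rw [Finset.disjoint_left]
  intro i hi hi'
  simp only [mem_filter, mem_univ, true_and] at hi hi'
  rw [hi.2] at hi'
  exact Bool.noConfusion hi'.2

/-- adjacency: `y` is obtained from `x` by moving one unit from the second
vector to the first. -/
def Adj (x y : (Fin n → Bool) × (Fin n → Bool)) : Prop :=
  ∃ i, x.1 i = false ∧ x.2 i = true ∧
    y.1 = Function.update x.1 i true ∧ y.2 = Function.update x.2 i false

instance instDecAdj (x y : (Fin n → Bool) × (Fin n → Bool)) : Decidable (Adj x y) := by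
  unfold Adj; infer_instance

lemma outdeg (s t : ℕ) {x} (hx : x ∈ Pr p q base tgt s 0 (t+1) 0) :
    ((Pr p q base tgt (s+1) 0 t 0).filter fun y => Adj x y).card
      = (univ.filter fun i => x.2 i = true ∧ x.1 i = false).card := by
  obtain ⟨h1, h2, h3, h4, h5, h6, h7⟩ := mem_Pr.mp hx
  refine (Finset.card_bij
    (fun i (hi : i ∈ univ.filter fun i => x.2 i = true ∧ x.1 i = false) =>
      (Function.update x.1 i true, Function.update x.2 i false)) ?_ ?_ ?_).symm
  · intro i hi
    simp only [mem_filter, mem_univ, true_and] at hi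
    obtain ⟨hv, hu⟩ := hi
    have hip : i ≠ p := fun e => by subst e; rw [h3] at hv; exact Bool.noConfusion hv
    have hiq : i ≠ q := fun e => by subst e; rw [h4] at hv; exact Bool.noConfusion hv
    rw [Finset.mem_filter]
    refine ⟨mem_Pr.mpr ?_, ⟨i, hu, hv, rfl, rfl⟩⟩
    refine ⟨?_, ?_, ?_, ?_, ?_, ?_, ?_⟩ <;> dsimp only
    · rw [Function.update_of_ne (Ne.symm hip)]; exact h1
    · rw [Function.update_of_ne (Ne.symm hiq)]; exact h2
    · rw [Function.update_of_ne (Ne.symm hip)]; exact h3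
    · rw [Function.update_of_ne (Ne.symm hiq)]; exact h4
    · intro j hjp hjq
      by_cases hji : j = i
      · subst hji
        have := h5 j hjp hjq
        rw [hu, hv] at this
        rw [Function.update_self, Function.update_self]
        have e0 : nb false = 0 := rfl
        have e1 : nb true = 1 := rfl
        omega
      · rw [Function.update_of_ne hji, Function.update_of_ne hji]
        exact h5 j hjp hjq
    · have := sum_nb_update x.1 i true
      rw [hu] at this
      have e0 : nb false = 0 := rfl
      have e1 : nb true = 1 := rfl
      omega
    · have := sum_nb_update x.2 i false
      rw [hv] at this
      have e0 : nb false = 0 := rfl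
      have e1 : nb true = 1 := rfl
      omega
  · intro i hi i' hi' heq
    simp only [mem_filter, mem_univ, true_and] at hi hi'
    by_contra hne
    have := congrFun (congrArg Prod.fst heq) i
    dsimp only at this
    rw [Function.update_self, Function.update_of_ne hne] at this
    rw [hi.2] at this
    exact Bool.noConfusion this
  · intro y hy
    rw [Finset.mem_filter] at hy
    obtain ⟨i, hu, hv, he1, he2⟩ := hy.2
    refine ⟨i, by simp only [mem_filter, mem_univ, true_and]; exact ⟨hv, hu⟩, ?_⟩
    have hyy : y = (y.1, y.2) := rfl
    rw [hyy, he1, he2]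


lemma indeg (s t : ℕ) {y} (hy : y ∈ Pr p q base tgt (s+1) 0 t 0) :
    ((Pr p q base tgt s 0 (t+1) 0).filter fun x => Adj x y).card
      = (univ.filter fun i => y.1 i = true ∧ y.2 i = false).card := by
  obtain ⟨h1, h2, h3, h4, h5, h6, h7⟩ := mem_Pr.mp hy
  refine (Finset.card_bij
    (fun i (hi : i ∈ univ.filter fun i => y.1 i = true ∧ y.2 i = false) =>
      (Function.update y.1 i false, Function.update y.2 i true)) ?_ ?_ ?_).symm
  · intro i hi
    simp only [mem_filter, mem_univ, true_and] at hi
    obtain ⟨hu, hv⟩ := hi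
    have hip : i ≠ p := fun e => by subst e; rw [h1] at hu; exact Bool.noConfusion hu
    have hiq : i ≠ q := fun e => by subst e; rw [h2] at hu; exact Bool.noConfusion hu
    rw [Finset.mem_filter]
    have adj : Adj (Function.update y.1 i false, Function.update y.2 i true) y := by
      refine ⟨i, by dsimp only; rw [Function.update_self], by dsimp only; rw [Function.update_self], ?_, ?_⟩
      · dsimp only
        rw [Function.update_idem]
        rw [← hu, Function.update_eq_self]
      · dsimp only
        rw [Function.update_idem]
        rw [← hv, Function.update_eq_self]
    refine ⟨mem_Pr.mpr ?_, adj⟩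
    refine ⟨?_, ?_, ?_, ?_, ?_, ?_, ?_⟩ <;> dsimp only
    · rw [Function.update_of_ne (Ne.symm hip)]; exact h1
    · rw [Function.update_of_ne (Ne.symm hiq)]; exact h2
    · rw [Function.update_of_ne (Ne.symm hip)]; exact h3
    · rw [Function.update_of_ne (Ne.symm hiq)]; exact h4
    · intro j hjp hjq
      by_cases hji : j = i
      · subst hji
        have := h5 j hjp hjq
        rw [hu, hv] at this
        rw [Function.update_self, Function.update_self]
        have e0 : nb false = 0 := rfl
        have e1 : nb true = 1 := rfl
        omega
      · rw [Function.update_of_ne hji, Function.update_of_ne hji]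
        exact h5 j hjp hjq
    · have := sum_nb_update y.1 i false
      rw [hu] at this
      have e0 : nb false = 0 := rfl
      have e1 : nb true = 1 := rfl
      omega
    · have := sum_nb_update y.2 i true
      rw [hv] at this
      have e0 : nb false = 0 := rfl
      have e1 : nb true = 1 := rfl
      omega
  · intro i hi i' hi' heq
    simp only [mem_filter, mem_univ, true_and] at hi hi'
    by_contra hne
    have := congrFun (congrArg Prod.snd heq) i
    dsimp only at this
    rw [Function.update_self, Function.update_of_ne hne] at this
    rw [hi.2] at this
    exact Bool.noConfusion this
  · intro x hx
    rw [Finset.mem_filter] at hx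
    obtain ⟨i, hxu, hxv, he1, he2⟩ := hx.2
    have hyu : y.1 i = true := by rw [he1, Function.update_self]
    have hyv : y.2 i = false := by rw [he2, Function.update_self]
    refine ⟨i, by simp only [mem_filter, mem_univ, true_and]; exact ⟨hyu, hyv⟩, ?_⟩
    have hxx : x = (x.1, x.2) := rfl
    rw [hxx]
    rw [he1, he2, Function.update_idem, Function.update_idem]
    rw [← hxu, ← hxv, Function.update_eq_self, Function.update_eq_self]

lemma handshake (s t : ℕ) :
    ∑ x ∈ Pr p q base tgt s 0 (t+1) 0,
        ((Pr p q base tgt (s+1) 0 t 0).filter fun y => Adj x y).card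
      = ∑ y ∈ Pr p q base tgt (s+1) 0 t 0,
        ((Pr p q base tgt s 0 (t+1) 0).filter fun x => Adj x y).card := by
  simp only [Finset.card_filter]
  rw [Finset.sum_comm]

lemma core (s t : ℕ) (hst : s ≤ t) :
    (Pr p q base tgt s 0 (t+1) 0).card ≤ (Pr p q base tgt (s+1) 0 t 0).card := by
  set A := Pr p q base tgt s 0 (t+1) 0 with hA
  set B := Pr p q base tgt (s+1) 0 t 0 with hB
  set g := (G p q base tgt).card with hg
  rcases Finset.eq_empty_or_nonempty A with hAe | ⟨x₀, hx₀⟩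
  · simp [hAe]
  have hgs : g ≤ s := by
    have hd := deg_add_G' p q base tgt hx₀
    have h6 := (mem_Pr.mp hx₀).2.2.2.2.2.1
    omega
  have houtA : ∀ x ∈ A, ((B.filter fun y => Adj x y)).card = t + 1 - g := by
    intro x hx
    rw [outdeg p q base tgt s t hx]
    have hd := deg_add_G p q base tgt hx
    have h7 := (mem_Pr.mp hx).2.2.2.2.2.2
    omega
  have hinB : ∀ y ∈ B, ((A.filter fun x => Adj x y)).card = s + 1 - g := by
    intro y hy
    rw [indeg p q base tgt s t hy]
    have hd := deg_add_G' p q base tgt hy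
    have h6 := (mem_Pr.mp hy).2.2.2.2.2.1
    omega
  have e1 : ∑ x ∈ A, ((B.filter fun y => Adj x y)).card = A.card * (t + 1 - g) := by
    rw [Finset.sum_congr rfl houtA, Finset.sum_const, smul_eq_mul]
  have e2 : ∑ y ∈ B, ((A.filter fun x => Adj x y)).card = B.card * (s + 1 - g) := by
    rw [Finset.sum_congr rfl hinB, Finset.sum_const, smul_eq_mul]
  have key : A.card * (t + 1 - g) = B.card * (s + 1 - g) := by
    rw [← e1, handshake p q base tgt s t, e2]
  have h1 : s + 1 - g ≤ t + 1 - g := by omega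
  have h2 : 0 < t + 1 - g := by omega
  have h3 : A.card * (t + 1 - g) ≤ B.card * (t + 1 - g) := by
    rw [key]
    exact Nat.mul_le_mul_left _ h1
  exact Nat.le_of_mul_le_mul_right h3 h2

end CoreSec

namespace S18
open CoreSec
variable {n : ℕ} (p q : Fin n) (base tgt : Fin n → ℕ)

lemma pair_comm (x dx y dy : ℕ) :
    (Pr p q base tgt x dx y dy).card = (Pr p q base tgt y dy x dx).card := by
  refine Finset.card_nbij' Prod.swap Prod.swap ?_ ?_ ?_ ?_
  · intro uv h
    obtain ⟨a1,a2,a3,a4,a5,a6,a7⟩ := mem_Pr.mp h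
    exact mem_Pr.mpr ⟨a3,a4,a1,a2, fun i h1 h2 => by have := a5 i h1 h2; dsimp only [Prod.swap]; omega, a7, a6⟩
  · intro uv h
    obtain ⟨a1,a2,a3,a4,a5,a6,a7⟩ := mem_Pr.mp h
    exact mem_Pr.mpr ⟨a3,a4,a1,a2, fun i h1 h2 => by have := a5 i h1 h2; dsimp only [Prod.swap]; omega, a7, a6⟩
  · intro uv _; rfl
  · intro uv _; rfl

lemma Pr_shift (x y : ℕ) : Pr p q base tgt (x+1) 1 y 0 = Pr p q base tgt x 0 y 0 := by
  unfold Pr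
  apply Finset.filter_congr
  intro uv _
  constructor <;> rintro ⟨a1,a2,a3,a4,a5,a6,a7⟩ <;>
    exact ⟨a1,a2,a3,a4,a5, by omega, by omega⟩

lemma Pr_shift2 (x y : ℕ) : Pr p q base tgt x 0 (y+1) 1 = Pr p q base tgt x 0 y 0 := by
  unfold Pr
  apply Finset.filter_congr
  intro uv _
  constructor <;> rintro ⟨a1,a2,a3,a4,a5,a6,a7⟩ <;>
    exact ⟨a1,a2,a3,a4,a5, by omega, by omega⟩

lemma pair_le {x y : ℕ} (hxy : x ≤ y) :
    (Pr p q base tgt x 1 y 0).card ≤ (Pr p q base tgt x 0 y 1).card := by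
  rcases x with _ | s
  · have he : Pr p q base tgt 0 1 y 0 = ∅ := by
      rw [Finset.eq_empty_iff_forall_notMem]
      intro uv h
      have := (mem_Pr.mp h).2.2.2.2.2.1
      omega
    simp [he]
  · rcases y with _ | t
    · exact absurd hxy (by omega)
    · have hst : s ≤ t := by omega
      rw [Pr_shift, Pr_shift2]
      exact core p q base tgt s t hst

end S18

namespace S18
open CoreSec
variable {n : ℕ}

def rowSum' (M : Fin n → Fin n → Bool) (i : Fin n) : ℕ := ∑ j, nb (M i j)
def colSum' (M : Fin n → Fin n → Bool) (j : Fin n) : ℕ := ∑ i, nb (M i j)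

def mask (p q : Fin n) (M : Fin n → Fin n → Bool) : Fin n → Fin n → Bool :=
  fun i j => if i = p ∨ i = q ∨ j = p ∨ j = q then false else M i j

def SB (a b : Fin n → ℕ) : Finset (Fin n → Fin n → Bool) :=
  univ.filter fun M => (∀ i, M i i = false) ∧ (∀ i, rowSum' M i = b i) ∧ (∀ j, colSum' M j = a j)

def key (p q : Fin n) (M : Fin n → Fin n → Bool) : (Fin n → Fin n → Bool) × Bool × Bool :=
  (mask p q M, M p q, M q p)

def fib (p q : Fin n) (a b : Fin n → ℕ) (U : Fin n → Fin n → Bool) (ε η : Bool) :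
    Finset (Fin n → Fin n → Bool) :=
  (SB a b).filter fun M => key p q M = (U, ε, η)

lemma sum_split (p q : Fin n) (hpq : p ≠ q) (f : Fin n → ℕ) :
    ∑ j, f j = f p + (f q + ∑ j ∈ (univ.erase p).erase q, f j) := by
  have hq : q ∈ univ.erase p := Finset.mem_erase.mpr ⟨Ne.symm hpq, mem_univ q⟩
  rw [Finset.add_sum_erase _ f hq, Finset.add_sum_erase _ f (mem_univ p)]

lemma mem_ee {p q j : Fin n} (h : j ∈ (univ.erase p).erase q) : j ≠ p ∧ j ≠ q := by
  simp only [Finset.mem_erase, mem_univ, and_true] at h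
  exact ⟨h.2, h.1⟩

/-- sum of a vector supported off `p,q` equals its sum over the complement. -/
lemma sum_nb_supp {p q : Fin n} (hpq : p ≠ q) {u : Fin n → Bool}
    (h1 : u p = false) (h2 : u q = false) :
    ∑ i, nb (u i) = ∑ i ∈ (univ.erase p).erase q, nb (u i) := by
  rw [sum_split p q hpq (fun i => nb (u i)), h1, h2]
  simp [nb]

def asm (p q : Fin n) (U : Fin n → Fin n → Bool) (ε η : Bool)
    (u v w z : Fin n → Bool) : Fin n → Fin n → Bool :=
  fun i j =>
    if i = p then (if j = p then false else if j = q then ε else w j)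
    else if i = q then (if j = p then η else if j = q then false else z j)
    else if j = p then u i else if j = q then v i else U i j

def dis (p q : Fin n) (M : Fin n → Fin n → Bool) :
    ((Fin n → Bool) × (Fin n → Bool)) × ((Fin n → Bool) × (Fin n → Bool)) :=
  ((fun i => if i = p ∨ i = q then false else M i p,
    fun i => if i = p ∨ i = q then false else M i q),
   (fun j => if j = p ∨ j = q then false else M p j,
    fun j => if j = p ∨ j = q then false else M q j))

lemma fib_card (p q : Fin n) (hpq : p ≠ q) (a b : Fin n → ℕ)
    (U : Fin n → Fin n → Bool)
    (hU1 : ∀ i j, (i = p ∨ i = q ∨ j = p ∨ j = q) → U i j = false)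
    (hU2 : ∀ i, U i i = false) (ε η : Bool) :
    (fib p q a b U ε η).card
      = (Pr p q (fun i => rowSum' U i) b (a p) (nb η) (a q) (nb ε)).card
        * (Pr p q (fun c => colSum' U c) a (b p) (nb ε) (b q) (nb η)).card := by
  have hqp : q ≠ p := Ne.symm hpq
  have hrowU : ∀ i, rowSum' U i = ∑ j ∈ (univ.erase p).erase q, nb (U i j) := by
    intro i
    rw [rowSum', sum_split p q hpq (fun j => nb (U i j)),
        hU1 i p (Or.inr (Or.inr (Or.inl rfl))), hU1 i q (Or.inr (Or.inr (Or.inr rfl)))]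
    simp [nb]
  have hcolU : ∀ j, colSum' U j = ∑ i ∈ (univ.erase p).erase q, nb (U i j) := by
    intro j
    rw [colSum', sum_split p q hpq (fun i => nb (U i j)),
        hU1 p j (Or.inl rfl), hU1 q j (Or.inr (Or.inl rfl))]
    simp [nb]
  rw [← Finset.card_product]
  refine Finset.card_nbij' (dis p q)
    (fun x => asm p q U ε η x.1.1 x.1.2 x.2.1 x.2.2) ?_ ?_ ?_ ?_
  · -- forward membership
    intro M hM
    simp only [Finset.mem_coe, fib, SB, Finset.mem_filter, mem_univ, true_and, key, Prod.mk.injEq] at hM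
    obtain ⟨⟨hd, hr, hc⟩, hmask, hpqv, hqpv⟩ := hM
    have hUM : ∀ i j, i ≠ p → i ≠ q → j ≠ p → j ≠ q → U i j = M i j := by
      intro i j h1 h2 h3 h4
      rw [← hmask]
      simp [mask, h1, h2, h3, h4]
    rw [Finset.mem_coe, Finset.mem_product]
    constructor
    · refine mem_Pr.mpr ⟨by simp [dis], by simp [dis, hpq], by simp [dis], by simp [dis, hpq], ?_, ?_, ?_⟩
      · -- row pattern
        intro i hip hiq
        have hrow := hr i
        rw [rowSum', sum_split p q hpq (fun j => nb (M i j))] at hrow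
        have hees : ∑ j ∈ (univ.erase p).erase q, nb (M i j)
            = ∑ j ∈ (univ.erase p).erase q, nb (U i j) := by
          refine Finset.sum_congr rfl fun j hj => ?_
          obtain ⟨hjp, hjq⟩ := mem_ee hj
          rw [hUM i j hip hiq hjp hjq]
        rw [hees] at hrow
        have h1 : rowSum' U i = ∑ j ∈ (univ.erase p).erase q, nb (U i j) := hrowU i
        simp only [dis, hip, hiq, or_self, if_false]
        omega
      · -- column p sum
        have hcol := hc p
        rw [colSum', sum_split p q hpq (fun i => nb (M i p)), hd p, hqpv] at hcol
        have : ∑ i, nb ((dis p q M).1.1 i)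
            = ∑ i ∈ (univ.erase p).erase q, nb (M i p) := by
          rw [sum_nb_supp hpq (by simp [dis]) (by simp [dis, hpq])]
          refine Finset.sum_congr rfl fun i hi => ?_
          obtain ⟨hip, hiq⟩ := mem_ee hi
          simp [dis, hip, hiq]
        rw [this]
        have e0 : nb false = 0 := rfl
        omega
      · -- column q sum
        have hcol := hc q
        rw [colSum', sum_split p q hpq (fun i => nb (M i q)), hpqv, hd q] at hcol
        have : ∑ i, nb ((dis p q M).1.2 i)
            = ∑ i ∈ (univ.erase p).erase q, nb (M i q) := by
          rw [sum_nb_supp hpq (by simp [dis]) (by simp [dis, hpq])]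
          refine Finset.sum_congr rfl fun i hi => ?_
          obtain ⟨hip, hiq⟩ := mem_ee hi
          simp [dis, hip, hiq]
        rw [this]
        have e0 : nb false = 0 := rfl
        omega
    · refine mem_Pr.mpr ⟨by simp [dis], by simp [dis, hpq], by simp [dis], by simp [dis, hpq], ?_, ?_, ?_⟩
      · -- column pattern
        intro j hjp hjq
        have hcol := hc j
        rw [colSum', sum_split p q hpq (fun i => nb (M i j))] at hcol
        have hees : ∑ i ∈ (univ.erase p).erase q, nb (M i j)
            = ∑ i ∈ (univ.erase p).erase q, nb (U i j) := by
          refine Finset.sum_congr rfl fun i hi => ?_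
          obtain ⟨hip, hiq⟩ := mem_ee hi
          rw [hUM i j hip hiq hjp hjq]
        rw [hees] at hcol
        have h1 : colSum' U j = ∑ i ∈ (univ.erase p).erase q, nb (U i j) := hcolU j
        simp only [dis, hjp, hjq, or_self, if_false]
        omega
      · -- row p sum
        have hrow := hr p
        rw [rowSum', sum_split p q hpq (fun j => nb (M p j)), hd p, hpqv] at hrow
        have : ∑ j, nb ((dis p q M).2.1 j)
            = ∑ j ∈ (univ.erase p).erase q, nb (M p j) := by
          rw [sum_nb_supp hpq (by simp [dis]) (by simp [dis, hpq])]
          refine Finset.sum_congr rfl fun j hj => ?_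
          obtain ⟨hjp, hjq⟩ := mem_ee hj
          simp [dis, hjp, hjq]
        rw [this]
        have e0 : nb false = 0 := rfl
        omega
      · -- row q sum
        have hrow := hr q
        rw [rowSum', sum_split p q hpq (fun j => nb (M q j)), hqpv, hd q] at hrow
        have : ∑ j, nb ((dis p q M).2.2 j)
            = ∑ j ∈ (univ.erase p).erase q, nb (M q j) := by
          rw [sum_nb_supp hpq (by simp [dis]) (by simp [dis, hpq])]
          refine Finset.sum_congr rfl fun j hj => ?_
          obtain ⟨hjp, hjq⟩ := mem_ee hj
          simp [dis, hjp, hjq]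
        rw [this]
        have e0 : nb false = 0 := rfl
        omega
  · -- backward membership
    intro x hx
    rw [Finset.mem_coe, Finset.mem_product] at hx
    obtain ⟨hX, hY⟩ := hx
    obtain ⟨xu1, xu2, xv1, xv2, xpat, xsu, xsv⟩ := mem_Pr.mp hX
    obtain ⟨yw1, yw2, yz1, yz2, ypat, ysw, ysz⟩ := mem_Pr.mp hY
    simp only [Finset.mem_coe, fib, SB, Finset.mem_filter, mem_univ, true_and, key, Prod.mk.injEq]
    set u := x.1.1; set v := x.1.2; set w := x.2.1; set z := x.2.2
    set M := asm p q U ε η u v w z with hMdef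
    have hMpq : M p q = ε := by simp [hMdef, asm, hpq, hqp]
    have hMqp : M q p = η := by simp [hMdef, asm, hpq, hqp]
    have hMpp : M p p = false := by simp [hMdef, asm]
    have hMqq : M q q = false := by simp [hMdef, asm, hpq, hqp]
    have hMrow_p : ∀ j, j ≠ p → j ≠ q → M p j = w j := by
      intro j h1 h2; simp [hMdef, asm, Ne.symm h1, Ne.symm h2, h1, h2]
    have hMrow_q : ∀ j, j ≠ p → j ≠ q → M q j = z j := by
      intro j h1 h2; simp [hMdef, asm, hqp, h1, h2]
    have hMcol_p : ∀ i, i ≠ p → i ≠ q → M i p = u i := by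
      intro i h1 h2; simp [hMdef, asm, h1, h2]
    have hMcol_q : ∀ i, i ≠ p → i ≠ q → M i q = v i := by
      intro i h1 h2; simp [hMdef, asm, h1, h2, hqp]
    have hMoff : ∀ i j, i ≠ p → i ≠ q → j ≠ p → j ≠ q → M i j = U i j := by
      intro i j h1 h2 h3 h4; simp [hMdef, asm, h1, h2, h3, h4]
    refine ⟨⟨?_, ?_, ?_⟩, ?_, hMpq, hMqp⟩
    · -- diagonal
      intro i
      by_cases hip : i = p
      · rw [hip]; exact hMpp
      by_cases hiq : i = q
      · rw [hiq]; exact hMqq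
      · rw [hMoff i i hip hiq hip hiq]; exact hU2 i
    · -- row sums
      intro i
      rw [rowSum', sum_split p q hpq (fun j => nb (M i j))]
      by_cases hip : i = p
      · rw [hip]
        rw [hMpp, hMpq]
        have : ∑ j ∈ (univ.erase p).erase q, nb (M p j) = ∑ j, nb (w j) := by
          rw [sum_nb_supp hpq yw1 yw2]
          refine Finset.sum_congr rfl fun j hj => ?_
          obtain ⟨h1, h2⟩ := mem_ee hj
          rw [hMrow_p j h1 h2]
        rw [this]
        have e0 : nb false = 0 := rfl
        omega
      by_cases hiq : i = q
      · rw [hiq]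
        rw [hMqq, hMqp]
        have : ∑ j ∈ (univ.erase p).erase q, nb (M q j) = ∑ j, nb (z j) := by
          rw [sum_nb_supp hpq yz1 yz2]
          refine Finset.sum_congr rfl fun j hj => ?_
          obtain ⟨h1, h2⟩ := mem_ee hj
          rw [hMrow_q j h1 h2]
        rw [this]
        have e0 : nb false = 0 := rfl
        omega
      · rw [hMcol_p i hip hiq, hMcol_q i hip hiq]
        have : ∑ j ∈ (univ.erase p).erase q, nb (M i j)
            = rowSum' U i := by
          rw [hrowU i]
          refine Finset.sum_congr rfl fun j hj => ?_
          obtain ⟨h1, h2⟩ := mem_ee hj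
          rw [hMoff i j hip hiq h1 h2]
        rw [this]
        have := xpat i hip hiq
        omega
    · -- column sums
      intro j
      rw [colSum', sum_split p q hpq (fun i => nb (M i j))]
      by_cases hjp : j = p
      · rw [hjp]
        rw [hMpp, hMqp]
        have : ∑ i ∈ (univ.erase p).erase q, nb (M i p) = ∑ i, nb (u i) := by
          rw [sum_nb_supp hpq xu1 xu2]
          refine Finset.sum_congr rfl fun i hi => ?_
          obtain ⟨h1, h2⟩ := mem_ee hi
          rw [hMcol_p i h1 h2]
        rw [this]
        have e0 : nb false = 0 := rfl
        omega
      by_cases hjq : j = q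
      · rw [hjq]
        rw [hMpq, hMqq]
        have : ∑ i ∈ (univ.erase p).erase q, nb (M i q) = ∑ i, nb (v i) := by
          rw [sum_nb_supp hpq xv1 xv2]
          refine Finset.sum_congr rfl fun i hi => ?_
          obtain ⟨h1, h2⟩ := mem_ee hi
          rw [hMcol_q i h1 h2]
        rw [this]
        have e0 : nb false = 0 := rfl
        omega
      · rw [hMrow_p j hjp hjq, hMrow_q j hjp hjq]
        have : ∑ i ∈ (univ.erase p).erase q, nb (M i j)
            = colSum' U j := by
          rw [hcolU j]
          refine Finset.sum_congr rfl fun i hi => ?_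
          obtain ⟨h1, h2⟩ := mem_ee hi
          rw [hMoff i j h1 h2 hjp hjq]
        rw [this]
        have := ypat j hjp hjq
        omega
    · -- mask equals U
      funext i j
      simp only [mask]
      by_cases hto : i = p ∨ i = q ∨ j = p ∨ j = q
      · rw [if_pos hto]
        exact (hU1 i j hto).symm
      · rw [if_neg hto]
        push_neg at hto
        exact hMoff i j hto.1 hto.2.1 hto.2.2.1 hto.2.2.2
  · -- left inverse
    intro M hM
    simp only [Finset.mem_coe, fib, SB, Finset.mem_filter, mem_univ, true_and, key, Prod.mk.injEq] at hM
    obtain ⟨⟨hd, hr, hc⟩, hmask, hpqv, hqpv⟩ := hM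
    funext i j
    simp only [asm, dis]
    by_cases hip : i = p
    · rw [hip]
      by_cases hjp : j = p
      · rw [hjp]; simp [hd p, hpq, hqp]
      by_cases hjq : j = q
      · rw [hjq]; simp [hpqv, hpq, hqp]
      · simp [hjp, hjq, hpq, hqp]
    by_cases hiq : i = q
    · rw [hiq]
      by_cases hjp : j = p
      · rw [hjp]; simp [hqpv, hip, hqp, hpq]
      by_cases hjq : j = q
      · rw [hjq]; simp [hip, hqp, hd q, hpq]
      · simp [hip, hjp, hjq, hqp, hpq]
    by_cases hjp : j = p
    · rw [hjp]; simp [hip, hiq, hpq, hqp]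
    by_cases hjq : j = q
    · rw [hjq]; simp [hip, hiq, hpq, hqp]
    · simp only [hip, hiq, hjp, hjq, if_false]
      rw [← hmask]
      simp [mask, hip, hiq, hjp, hjq, hpq, hqp]
  · -- right inverse
    intro x hx
    rw [Finset.mem_coe, Finset.mem_product] at hx
    obtain ⟨hX, hY⟩ := hx
    obtain ⟨xu1, xu2, xv1, xv2, _, _, _⟩ := mem_Pr.mp hX
    obtain ⟨yw1, yw2, yz1, yz2, _, _, _⟩ := mem_Pr.mp hY
    have hxpair : x = ((x.1.1, x.1.2), (x.2.1, x.2.2)) := rfl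
    rw [hxpair]
    simp only [dis, asm]
    refine Prod.ext (Prod.ext ?_ ?_) (Prod.ext ?_ ?_) <;> dsimp only <;> funext i
    · by_cases hip : i = p
      · rw [hip]; simp [xu1, hpq, hqp]
      by_cases hiq : i = q
      · rw [hiq]; simp [xu2, hqp, hpq]
      · simp [hip, hiq, hpq, hqp]
    · by_cases hip : i = p
      · rw [hip]; simp [xv1, hpq, hqp]
      by_cases hiq : i = q
      · rw [hiq]; simp [xv2, hqp, hpq]
      · simp [hip, hiq, hpq, hqp]
    · by_cases hip : i = p
      · rw [hip]; simp [yw1, hpq, hqp]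
      by_cases hiq : i = q
      · rw [hiq]; simp [yw2, hpq, hqp]
      · simp [hip, hiq, hpq, hqp]
    · by_cases hip : i = p
      · rw [hip]; simp [yz1, hqp, hpq]
      by_cases hiq : i = q
      · rw [hiq]; simp [yz2, hqp, hpq]
      · simp [hip, hiq, hqp, hpq]

end S18

namespace S18
open CoreSec
variable {n : ℕ}

lemma N2_eq (a b : Fin n → ℕ) : N2 a b = (SB a b).card := by
  rw [N2, Nat.card_eq_fintype_card, SB, Fintype.card_subtype]
  rfl

lemma shape_of_mem {p q : Fin n} {a b : Fin n → ℕ} {U ε η} {M}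
    (hM : M ∈ fib p q a b U ε η) :
    (∀ i j, (i = p ∨ i = q ∨ j = p ∨ j = q) → U i j = false) ∧ (∀ i, U i i = false) := by
  simp only [Finset.mem_coe, fib, SB, Finset.mem_filter, mem_univ, true_and, key, Prod.mk.injEq] at hM
  obtain ⟨⟨hd, _, _⟩, hmask, _, _⟩ := hM
  constructor
  · intro i j hto
    rw [← hmask, mask, if_pos hto]
  · intro i
    rw [← hmask, mask]
    by_cases hto : i = p ∨ i = q ∨ i = p ∨ i = q
    · rw [if_pos hto]
    · rw [if_neg hto]; exact hd i

lemma Pr_congr_tgt (p q : Fin n) (base tgt tgt' : Fin n → ℕ) (x dx y dy : ℕ)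
    (h : ∀ i, i ≠ p → i ≠ q → tgt i = tgt' i) :
    Pr p q base tgt x dx y dy = Pr p q base tgt' x dx y dy := by
  unfold Pr
  apply Finset.filter_congr
  intro uv _
  constructor <;> rintro ⟨a1,a2,a3,a4,a5,a6,a7⟩ <;>
    refine ⟨a1,a2,a3,a4, fun i h1 h2 => ?_, a6, a7⟩
  · rw [← h i h1 h2]; exact a5 i h1 h2
  · rw [h i h1 h2]; exact a5 i h1 h2

lemma rearrange {A1 A2 B1 B2 : ℕ} (hA : A1 ≤ A2) (hB : B1 ≤ B2) :
    A2 * B1 + A1 * B2 ≤ A1 * B1 + A2 * B2 := by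
  obtain ⟨k, rfl⟩ := Nat.le.dest hA
  obtain ⟨m, rfl⟩ := Nat.le.dest hB
  have : A1 * B1 + (A1 + k) * (B1 + m) = ((A1 + k) * B1 + A1 * (B1 + m)) + k * m := by
    ring
  rw [this]
  exact Nat.le_add_right _ _

lemma swap_step (p q : Fin n) (hpq : p ≠ q) (a b : Fin n → ℕ)
    (hab : a p ≤ a q) (hb : b p ≤ b q) :
    N2 a b ≤ N2 (a ∘ Equiv.swap p q) b := by
  set a' := a ∘ Equiv.swap p q with ha'
  have ha'p : a' p = a q := by simp [ha']
  have ha'q : a' q = a p := by simp [ha']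
  have ha'c : ∀ c, c ≠ p → c ≠ q → a' c = a c := by
    intro c h1 h2; simp [ha', Equiv.swap_apply_of_ne_of_ne h1 h2]
  rw [N2_eq, N2_eq]
  have L : ∀ (c : Fin n → ℕ), (SB c b).card
      = ∑ U : Fin n → Fin n → Bool, ∑ ε : Bool, ∑ η : Bool, (fib p q c b U ε η).card := by
    intro c
    rw [Finset.card_eq_sum_card_fiberwise (f := key p q) (t := univ) (fun x _ => mem_univ _)]
    simp only [Fintype.sum_prod_type]
    rfl
  rw [L a, L a']
  refine Finset.sum_le_sum fun U _ => ?_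
  by_cases hsh : (∀ i j, (i = p ∨ i = q ∨ j = p ∨ j = q) → U i j = false) ∧ (∀ i, U i i = false)
  · obtain ⟨hU1, hU2⟩ := hsh
    have hcards : ∀ (c : Fin n → ℕ) ε η, (fib p q c b U ε η).card
        = (Pr p q (fun i => rowSum' U i) b (c p) (nb η) (c q) (nb ε)).card
          * (Pr p q (fun c => colSum' U c) c (b p) (nb ε) (b q) (nb η)).card :=
      fun c ε η => fib_card p q hpq c b U hU1 hU2 ε η
    have hYeq : ∀ dx dy x y, (Pr p q (fun c => colSum' U c) a' x dx y dy).card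
        = (Pr p q (fun c => colSum' U c) a x dx y dy).card := by
      intro dx dy x y
      rw [Pr_congr_tgt p q _ a' a _ _ _ _ (fun i h1 h2 => ha'c i h1 h2)]
    simp only [hcards, Fintype.sum_bool, ha'p, ha'q, hYeq]
    have e1 : nb true = 1 := rfl
    have e0 : nb false = 0 := rfl
    rw [e1, e0]
    -- abbreviations
    set RB := fun i => rowSum' U i
    set CB := fun c => colSum' U c
    have htt : (Pr p q RB b (a q) 1 (a p) 1).card = (Pr p q RB b (a p) 1 (a q) 1).card :=
      pair_comm p q RB b (a q) 1 (a p) 1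
    have hff : (Pr p q RB b (a q) 0 (a p) 0).card = (Pr p q RB b (a p) 0 (a q) 0).card :=
      pair_comm p q RB b (a q) 0 (a p) 0
    have htf : (Pr p q RB b (a q) 0 (a p) 1).card = (Pr p q RB b (a p) 1 (a q) 0).card :=
      pair_comm p q RB b (a q) 0 (a p) 1
    have hft : (Pr p q RB b (a q) 1 (a p) 0).card = (Pr p q RB b (a p) 0 (a q) 1).card :=
      pair_comm p q RB b (a q) 1 (a p) 0
    rw [htt, hff, htf, hft]
    have hA : (Pr p q RB b (a p) 1 (a q) 0).card ≤ (Pr p q RB b (a p) 0 (a q) 1).card :=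
      pair_le p q RB b hab
    have hB : (Pr p q CB a (b p) 1 (b q) 0).card ≤ (Pr p q CB a (b p) 0 (b q) 1).card :=
      pair_le p q CB a hb
    set A1 := (Pr p q RB b (a p) 1 (a q) 0).card
    set A2 := (Pr p q RB b (a p) 0 (a q) 1).card
    set B1 := (Pr p q CB a (b p) 1 (b q) 0).card
    set B2 := (Pr p q CB a (b p) 0 (b q) 1).card
    have := rearrange hA hB
    omega
  · have hz : ∀ (c : Fin n → ℕ) ε η, (fib p q c b U ε η).card = 0 := by
      intro c ε η
      rw [Finset.card_eq_zero, Finset.eq_empty_iff_forall_notMem]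
      intro M hM
      exact hsh (shape_of_mem hM)
    simp [hz]

end S18

namespace S18
variable {n : ℕ}

/-- number of ascents (inversions w.r.t. nonincreasing order) -/
def asc (c : Fin n → ℕ) : ℕ :=
  ((univ : Finset (Fin n × Fin n)).filter fun ij => ij.1 < ij.2 ∧ c ij.1 < c ij.2).card

lemma noninc_of_asc_zero {c : Fin n → ℕ} (h : asc c = 0) : Nonincreasing c := by
  intro i j hij
  rcases eq_or_lt_of_le hij with he | hlt
  · rw [he]
  · by_contra hcon
    push_neg at hcon
    have hmem : ((i, j) : Fin n × Fin n)
        ∈ ((univ : Finset (Fin n × Fin n)).filter fun ij => ij.1 < ij.2 ∧ c ij.1 < c ij.2) :=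
      Finset.mem_filter.mpr ⟨mem_univ _, hlt, hcon⟩
    have := Finset.card_pos.mpr ⟨(i, j), hmem⟩
    rw [asc] at h
    omega

lemma exists_adj_ascent {c : Fin n → ℕ} (h : ¬ Nonincreasing c) :
    ∃ p q : Fin n, (q : ℕ) = (p : ℕ) + 1 ∧ c p < c q := by
  by_contra hcon
  push_neg at hcon
  apply h
  have key : ∀ d : ℕ, ∀ i j : Fin n, (j : ℕ) = (i : ℕ) + d → c j ≤ c i := by
    intro d
    induction d with
    | zero =>
      intro i j hij
      have : i = j := Fin.ext (by omega)
      rw [this]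
    | succ d ih =>
      intro i j hij
      have hk : (i : ℕ) + d < n := by have := j.isLt; omega
      have h1 : c j ≤ c ⟨(i : ℕ) + d, hk⟩ := by
        have := hcon ⟨(i : ℕ) + d, hk⟩ j (by simp; omega)
        omega
      exact le_trans h1 (ih i ⟨(i : ℕ) + d, hk⟩ rfl)
  intro i j hij
  exact key ((j : ℕ) - (i : ℕ)) i j (by rw [Fin.le_def] at hij; omega)

lemma swap_lt_of_adj {p q i j : Fin n} (hq : (q : ℕ) = (p : ℕ) + 1)
    (hij : i < j) (hne : ¬(i = p ∧ j = q)) : Equiv.swap p q i < Equiv.swap p q j := by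
  have hep : Equiv.swap p q p = q := Equiv.swap_apply_left p q
  have heq : Equiv.swap p q q = p := Equiv.swap_apply_right p q
  have heo : ∀ k : Fin n, k ≠ p → k ≠ q → Equiv.swap p q k = k :=
    fun k h1 h2 => Equiv.swap_apply_of_ne_of_ne h1 h2
  by_cases hip : i = p
  · rw [hip, hep]
    by_cases hjq : j = q
    · exact absurd ⟨hip, hjq⟩ hne
    by_cases hjp : j = p
    · exfalso; rw [hip, hjp] at hij; exact lt_irrefl _ hij
    · rw [heo j hjp hjq, Fin.lt_def]
      rw [hip, Fin.lt_def] at hij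
      have : (j : ℕ) ≠ (q : ℕ) := fun h => hjq (Fin.ext h)
      omega
  by_cases hiq : i = q
  · rw [hiq, heq]
    by_cases hjp : j = p
    · exfalso; rw [hiq, hjp, Fin.lt_def] at hij; omega
    by_cases hjq : j = q
    · exfalso; rw [hiq, hjq] at hij; exact lt_irrefl _ hij
    · rw [heo j hjp hjq, Fin.lt_def]
      rw [hiq, Fin.lt_def] at hij
      omega
  · rw [heo i hip hiq]
    by_cases hjp : j = p
    · rw [hjp, hep, Fin.lt_def]
      rw [hjp, Fin.lt_def] at hij
      omega
    by_cases hjq : j = q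
    · rw [hjq, heq, Fin.lt_def]
      rw [hjq, Fin.lt_def] at hij
      have : (i : ℕ) ≠ (p : ℕ) := fun h => hip (Fin.ext h)
      omega
    · rw [heo j hjp hjq]
      exact hij

lemma asc_swap {c : Fin n → ℕ} {p q : Fin n} (hq : (q : ℕ) = (p : ℕ) + 1)
    (hc : c p < c q) : asc (c ∘ Equiv.swap p q) < asc c := by
  have hpq : p < q := by rw [Fin.lt_def]; omega
  have he : ∀ i, Equiv.swap p q (Equiv.swap p q i) = i :=
    fun i => Equiv.swap_apply_self p q i
  have hep : Equiv.swap p q p = q := Equiv.swap_apply_left p q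
  have heq : Equiv.swap p q q = p := Equiv.swap_apply_right p q
  have hmem : ((p, q) : Fin n × Fin n)
      ∈ ((univ : Finset (Fin n × Fin n)).filter fun ij => ij.1 < ij.2 ∧ c ij.1 < c ij.2) :=
    Finset.mem_filter.mpr ⟨mem_univ _, hpq, hc⟩
  have hcardeq : asc (c ∘ Equiv.swap p q)
      = ((((univ : Finset (Fin n × Fin n)).filter
          fun ij => ij.1 < ij.2 ∧ c ij.1 < c ij.2)).erase (p, q)).card := by
    refine Finset.card_nbij' (fun ij => (Equiv.swap p q ij.1, Equiv.swap p q ij.2))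
      (fun ij => (Equiv.swap p q ij.1, Equiv.swap p q ij.2)) ?_ ?_ ?_ ?_
    · rintro ⟨i, j⟩ hx
      simp only [Finset.mem_coe, asc, Finset.mem_filter, mem_univ, true_and, Function.comp_apply] at hx
      obtain ⟨hij, hcond⟩ := hx
      have hne : ¬(i = p ∧ j = q) := by
        rintro ⟨h1, h2⟩
        rw [h1, h2, hep, heq] at hcond
        omega
      rw [Finset.mem_coe, Finset.mem_erase]
      constructor
      · intro hpeq
        have h1 : Equiv.swap p q i = p := congrArg Prod.fst hpeq
        have h2 : Equiv.swap p q j = q := congrArg Prod.snd hpeq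
        have h1' : i = q := by rw [← he i, h1, hep]
        have h2' : j = p := by rw [← he j, h2, heq]
        rw [h1', h2'] at hij
        rw [Fin.lt_def] at hij
        omega
      · exact Finset.mem_filter.mpr ⟨mem_univ _, swap_lt_of_adj hq hij hne, hcond⟩
    · rintro ⟨i, j⟩ hx
      rw [Finset.mem_coe, Finset.mem_erase] at hx
      obtain ⟨hxne, hx⟩ := hx
      simp only [Finset.mem_filter, mem_univ, true_and] at hx
      obtain ⟨hij, hcond⟩ := hx
      have hne : ¬(i = p ∧ j = q) := by
        rintro ⟨h1, h2⟩
        exact hxne (by rw [h1, h2])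
      simp only [Finset.mem_coe, asc, Finset.mem_filter, mem_univ, true_and, Function.comp_apply]
      refine ⟨swap_lt_of_adj hq hij hne, ?_⟩
      rw [he i, he j]
      exact hcond
    · rintro ⟨i, j⟩ _
      simp [he]
    · rintro ⟨i, j⟩ _
      simp [he]
  rw [hcardeq, Finset.card_erase_of_mem hmem]
  have hpos := Finset.card_pos.mpr ⟨(p, q), hmem⟩
  unfold asc
  omega

lemma noninc_unique (a c : Fin n → ℕ) (τ σ : Equiv.Perm (Fin n)) (hc : Nonincreasing c)
    (hτ : c = a ∘ τ) (hσ : Nonincreasing (a ∘ σ)) : c = a ∘ σ := by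
  let f : Fin n → ℕᵒᵈ := fun i => OrderDual.toDual (a i)
  have hmσ : Monotone (f ∘ σ) := by
    intro i j hij
    exact hσ i j hij
  have hmτ : Monotone (f ∘ τ) := by
    intro i j hij
    have : c j ≤ c i := hc i j hij
    rw [hτ] at this
    exact this
  have h1 : f ∘ σ = f ∘ Tuple.sort f := (Tuple.comp_sort_eq_comp_iff_monotone).mpr hmσ
  have h2 : f ∘ τ = f ∘ Tuple.sort f := (Tuple.comp_sort_eq_comp_iff_monotone).mpr hmτ
  funext i
  have := congrFun (h2.trans h1.symm) i
  have h3 : a (τ i) = a (σ i) := this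
  rw [hτ]
  exact h3

lemma sort_le (a b : Fin n → ℕ) (hb : Nondecreasing b) (σ : Equiv.Perm (Fin n))
    (hmono : Nonincreasing (a ∘ σ)) :
    ∀ (m : ℕ) (c : Fin n → ℕ) (τ : Equiv.Perm (Fin n)),
      c = a ∘ τ → asc c ≤ m → N2 c b ≤ N2 (a ∘ σ) b := by
  intro m
  induction m with
  | zero =>
    intro c τ hcτ h0
    have : c = a ∘ σ := noninc_unique a c τ σ (noninc_of_asc_zero (by omega)) hcτ hmono
    rw [this]
  | succ m ih =>
    intro c τ hcτ hm
    by_cases hni : Nonincreasing c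
    · rw [noninc_unique a c τ σ hni hcτ hmono]
    · obtain ⟨p, q, hq, hc⟩ := exists_adj_ascent hni
      have hpq : p ≠ q := by
        intro h; rw [h] at hq; omega
      have hple : p ≤ q := by rw [Fin.le_def]; omega
      have step : N2 c b ≤ N2 (c ∘ Equiv.swap p q) b :=
        swap_step p q hpq c b (le_of_lt hc) (hb p q hple)
      have hdec : asc (c ∘ Equiv.swap p q) < asc c := asc_swap hq hc
      have hcτ' : c ∘ Equiv.swap p q = a ∘ (τ * Equiv.swap p q) := by
        rw [hcτ]
        funext i
        simp [Equiv.Perm.mul_apply]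
      exact le_trans step (ih (c ∘ Equiv.swap p q) (τ * Equiv.swap p q) hcτ' (by omega))

end S18

theorem stmt18 {n : ℕ} (a b : Fin n → ℕ) (σ : Equiv.Perm (Fin n))
    (hd : Digraphic a b) (hb : Nondecreasing b)
    (hmono : Nonincreasing (a ∘ σ)) :
    Digraphic (a ∘ σ) b ∧ N2 a b ≤ N2 (a ∘ σ) b := by
  have hle : N2 a b ≤ N2 (a ∘ σ) b :=
    S18.sort_le a b hb σ hmono (S18.asc a) a 1 (by funext i; rfl) le_rfl
  exact ⟨lt_of_lt_of_le hd hle, hle⟩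
end
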